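/- arXiv:2302.01463 — 6 statements merged into one kernel-verified Lean document; each statement's English description precedes it below -/
import Mathlib

section
/- Let f : R^d → R be differentiable and L-smooth. For any points x, x̃ ∈ R^d and stepsize γ > 0, defining x̃' = x̃ − γ∇f(x), one has f(x̃') ≤ f(x̃) − (γ/2)‖∇f(x̃)‖² − (γ/2)(1 − Lγ)‖∇f(x)‖² + (γL²/2)‖x − x̃‖². -/
open scoped RealInnerProductSpace

lemma descent_lemma
    (d : ℕ) (f : EuclideanSpace ℝ (Fin d) → ℝ)
    (g : EuclideanSpace ℝ (Fin d) → EuclideanSpace ℝ (Fin d))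
    (hgrad : ∀ x, HasGradientAt f (g x) x)
    (L : ℝ) (hL : 0 < L)
    (hsmooth : ∀ x y, ‖g x - g y‖ ≤ L * ‖x - y‖)
    (x y : EuclideanSpace ℝ (Fin d)) :
    f y ≤ f x + ⟪g x, y - x⟫ + L / 2 * ‖y - x‖ ^ 2 := by
  set v := y - x with hv
  have hcg : Continuous g := by
    rw [Metric.continuous_iff]
    intro a ε hε
    refine ⟨ε / L, by positivity, fun b hb => ?_⟩
    calc dist (g b) (g a) = ‖g b - g a‖ := by rw [dist_eq_norm]
    _ ≤ L * ‖b - a‖ := hsmooth b a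
    _ < L * (ε / L) := by
        rw [← dist_eq_norm]
        exact mul_lt_mul_of_pos_left hb hL
    _ = ε := by field_simp
  have key : ∀ t : ℝ, HasDerivAt (fun t : ℝ => f (x + t • v)) ⟪g (x + t • v), v⟫ t := by
    intro t
    have hc : HasDerivAt (fun t : ℝ => x + t • v) v t := by
      simpa using ((hasDerivAt_id t).smul_const v).const_add x
    have := ((hgrad (x + t • v)).hasFDerivAt.comp_hasDerivAt t hc)
    simp at this; exact this
  have hcont : Continuous (fun t : ℝ => ⟪g (x + t • v), v⟫) := by
    exact (hcg.comp (by continuity)).inner continuous_const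
  have heq : f y - f x = ∫ t in (0:ℝ)..1, ⟪g (x + t • v), v⟫ := by
    have := intervalIntegral.integral_eq_sub_of_hasDerivAt
      (fun t _ => key t) (hcont.intervalIntegrable 0 1)
    rw [this]; simp [hv]
  have hbound : ∫ t in (0:ℝ)..1, ⟪g (x + t • v), v⟫ ≤
      ∫ t in (0:ℝ)..1, (⟪g x, v⟫ + L * t * ‖v‖ ^ 2) := by
    apply intervalIntegral.integral_mono_on (by norm_num)
      (hcont.intervalIntegrable 0 1)
      ((by continuity : Continuous fun t : ℝ => ⟪g x, v⟫ + L * t * ‖v‖ ^ 2).intervalIntegrable 0 1)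
    intro t ht
    have h1 : ⟪g (x + t • v) - g x, v⟫ ≤ ‖g (x + t • v) - g x‖ * ‖v‖ :=
      real_inner_le_norm _ _
    have h2 : ‖g (x + t • v) - g x‖ ≤ L * (t * ‖v‖) := by
      have := hsmooth (x + t • v) x
      simpa [norm_smul, abs_of_nonneg ht.1, mul_assoc] using this
    have h3 : ⟪g (x + t • v), v⟫ = ⟪g x, v⟫ + ⟪g (x + t • v) - g x, v⟫ := by
      rw [inner_sub_left]; ring
    nlinarith [norm_nonneg v, mul_le_mul_of_nonneg_right h2 (norm_nonneg v)]
  have hint : ∫ t in (0:ℝ)..1, (⟪g x, v⟫ + L * t * ‖v‖ ^ 2) =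
      ⟪g x, v⟫ + L / 2 * ‖v‖ ^ 2 := by
    rw [intervalIntegral.integral_add (f := fun _ : ℝ => ⟪g x, v⟫) (g := fun t : ℝ => L * t * ‖v‖ ^ 2) intervalIntegrable_const
      (((continuous_const.mul continuous_id').mul continuous_const : Continuous fun t : ℝ => L * t * ‖v‖ ^ 2).intervalIntegrable 0 1)]
    have h7 : (fun t : ℝ => L * t * ‖v‖ ^ 2) = fun t : ℝ => (L * ‖v‖ ^ 2) * t := by
      ext t; ring
    rw [h7, intervalIntegral.integral_const_mul, integral_id]
    simp
    ring
  linarith [heq ▸ hbound.trans_eq hint]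

/-- One-step descent inequality for the virtual sequence: if `f` is differentiable
with gradient `g` and `L`-smooth, then for `x̃' = x̃ − γ • g x`,
`f x̃' ≤ f x̃ − (γ/2)‖g x̃‖² − (γ/2)(1 − Lγ)‖g x‖² + (γL²/2)‖x − x̃‖²`. -/
theorem virtual_descent_step
    (d : ℕ) (f : EuclideanSpace ℝ (Fin d) → ℝ)
    (g : EuclideanSpace ℝ (Fin d) → EuclideanSpace ℝ (Fin d))
    (hgrad : ∀ x, HasGradientAt f (g x) x)
    (L : ℝ) (hL : 0 < L)
    (hsmooth : ∀ x y, ‖g x - g y‖ ≤ L * ‖x - y‖)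
    (γ : ℝ) (hγ : 0 < γ)
    (x xt : EuclideanSpace ℝ (Fin d)) :
    f (xt - γ • g x) ≤
      f xt - (γ / 2) * ‖g xt‖ ^ 2 - (γ / 2) * (1 - L * γ) * ‖g x‖ ^ 2
        + (γ * L ^ 2 / 2) * ‖x - xt‖ ^ 2 := by
  have hd := descent_lemma d f g hgrad L hL hsmooth xt (xt - γ • g x)
  have h1 : xt - γ • g x - xt = -(γ • g x) := by abel
  rw [h1] at hd
  have h2 : ⟪g xt, -(γ • g x)⟫ = -γ * ⟪g xt, g x⟫ := by
    rw [inner_neg_right, real_inner_smul_right]; ring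
  have h3 : ‖-(γ • g x)‖ = γ * ‖g x‖ := by
    rw [norm_neg, norm_smul, Real.norm_eq_abs, abs_of_pos hγ]
  have h4 : ‖g xt - g x‖ ^ 2 = ‖g xt‖ ^ 2 - 2 * ⟪g xt, g x⟫ + ‖g x‖ ^ 2 := by
    rw [norm_sub_sq_real]
  have h5 : ‖g xt - g x‖ ≤ L * ‖x - xt‖ := by
    have := hsmooth xt x
    rwa [← norm_neg (xt - x), neg_sub] at this
  have h6 : ‖g xt - g x‖ ^ 2 ≤ L ^ 2 * ‖x - xt‖ ^ 2 := by
    nlinarith [norm_nonneg (g xt - g x), norm_nonneg (x - xt)]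
  rw [h2, h3] at hd
  nlinarith [hd]
end

section
/- Consider perturbed gradient descent on f(x) = (L/2)‖x‖² in R^d with iterates x_{t+1} = (1 − γL)x_t − γ z_{t+1}, where z_t are independent mean-zero random vectors with E‖z_t‖² = σ². If γL < 1 and T ≥ (log 2)/(γL), then E[f(x_T)] − f* ≥ (L/2)(1 − γL)^{2T}‖x_0‖² + (1/8)γσ². -/
open MeasureTheory ProbabilityTheory

lemma sum_sq_integral {Ω : Type*} [MeasurableSpace Ω] (μ : Measure Ω) [IsProbabilityMeasure μ]
    (n : ℕ) (Y : ℕ → Ω → ℝ)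
    (hL2 : ∀ i, MeasureTheory.MemLp (Y i) 2 μ)
    (hindep : ∀ i j, i ≠ j → IndepFun (Y i) (Y j) μ)
    (hmean : ∀ i, ∫ ω, Y i ω ∂μ = 0) :
    ∫ ω, (∑ i ∈ Finset.range n, Y i ω) ^ 2 ∂μ
      = ∑ i ∈ Finset.range n, ∫ ω, (Y i ω) ^ 2 ∂μ := by
  have hint : ∀ i j, Integrable (fun ω => Y i ω * Y j ω) μ := by
    intro i j
    rcases eq_or_ne i j with rfl | h
    · simpa [sq] using (hL2 i).integrable_sq
    · exact (hindep i j h).integrable_mul ((hL2 i).integrable one_le_two)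
        ((hL2 j).integrable one_le_two)
  have h1 : ∀ ω, (∑ i ∈ Finset.range n, Y i ω) ^ 2
      = ∑ i ∈ Finset.range n, ∑ j ∈ Finset.range n, Y i ω * Y j ω := by
    intro ω; rw [sq, Finset.sum_mul_sum]
  simp_rw [h1]
  rw [integral_finset_sum _ (fun i _ => integrable_finset_sum _ (fun j _ => hint i j))]
  refine Finset.sum_congr rfl fun i hi => ?_
  rw [integral_finset_sum _ (fun j _ => hint i j)]
  rw [Finset.sum_eq_single i]
  · simp [sq]
  · intro j hj hji
    have := (hindep i j (Ne.symm hji)).integral_mul_eq_mul_integral (hL2 i).aestronglyMeasurable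
      (hL2 j).aestronglyMeasurable
    simpa [Pi.mul_apply, hmean i] using this
  · intro h; exact absurd hi h

open MeasureTheory ProbabilityTheory

/-- Noise lower bound for PGD on `f(x) = (L/2)‖x‖²`: for iterates
`x_{t+1} = (1 − γL) x_t − γ z_{t+1}` with independent mean-zero noise of
second moment `σ²`, if `γL < 1` and `T ≥ log 2/(γL)` then
`E[f(x_T)] − f* ≥ (L/2)(1 − γL)^{2T}‖x_0‖² + γσ²/8` (here `f* = 0`). -/
theorem pgd_noise_lower_bound
    {Ω : Type*} [MeasurableSpace Ω] (μ : Measure Ω) [IsProbabilityMeasure μ]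
    (d : ℕ) (γ L σ : ℝ) (hγ : 0 < γ) (hL : 0 < L) (h1 : γ * L < 1) (hσ : 0 ≤ σ)
    (f : EuclideanSpace ℝ (Fin d) → ℝ)
    (hf : ∀ y, f y = (L / 2) * ‖y‖ ^ 2)
    (z : ℕ → Ω → EuclideanSpace ℝ (Fin d))
    (hmeas : ∀ t, Measurable (z t))
    (hindep : iIndepFun z μ)
    (hL2 : ∀ t, MemLp (z t) 2 μ)
    (hmean : ∀ t, 1 ≤ t → ∫ ω, z t ω ∂μ = 0)
    (hvar : ∀ t, 1 ≤ t → ∫ ω, ‖z t ω‖ ^ 2 ∂μ = σ ^ 2)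
    (x0 : EuclideanSpace ℝ (Fin d)) (x : ℕ → Ω → EuclideanSpace ℝ (Fin d))
    (hx0 : ∀ ω, x 0 ω = x0)
    (hrec : ∀ t ω, x (t + 1) ω = (1 - γ * L) • x t ω - γ • z (t + 1) ω)
    (T : ℕ) (hT : (T : ℝ) ≥ Real.log 2 / (γ * L)) :
    (L / 2) * ((1 - γ * L) ^ (2 * T) * ‖x0‖ ^ 2) + (1 / 8) * γ * σ ^ 2 ≤
      ∫ ω, f (x T ω) ∂μ - 0 := by
  set r : ℝ := 1 - γ * L with hr
  have hr0 : 0 < r := by simp only [hr]; linarith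
  have hr1 : r < 1 := by simp only [hr]; nlinarith
  -- closed form for the iterates
  have key : ∀ t ω, x t ω
      = (r ^ t) • x0 - ∑ s ∈ Finset.range t, (γ * r ^ (t - 1 - s)) • z (s + 1) ω := by
    intro t
    induction t with
    | zero => intro ω; simp [hx0]
    | succ n ih =>
      intro ω
      rw [hrec, ih ω, Finset.sum_range_succ]
      have hco : ∀ s ∈ Finset.range n,
          r • ((γ * r ^ (n - 1 - s)) • z (s + 1) ω)
            = (γ * r ^ (n + 1 - 1 - s)) • z (s + 1) ω := by
        intro s hs
        rw [Finset.mem_range] at hs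
        rw [smul_smul]
        congr 1
        have h2 : n + 1 - 1 - s = (n - 1 - s) + 1 := by omega
        rw [h2, pow_succ]; ring
      rw [smul_sub, Finset.smul_sum, Finset.sum_congr rfl hco, smul_smul]
      have : r * r ^ n = r ^ (n + 1) := by rw [pow_succ]; ring
      rw [this]
      have h3 : n + 1 - 1 - n = 0 := by omega
      rw [h3]
      simp only [pow_zero, mul_one]
      abel
  set c : ℕ → ℝ := fun s => γ * r ^ (T - 1 - s) with hc
  have hzkL2 : ∀ t (k : Fin d), MemLp (fun ω => z t ω k) 2 μ :=
    fun t k => (EuclideanSpace.proj (𝕜 := ℝ) k).comp_memLp' (hL2 t)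
  have hzkmean : ∀ t, 1 ≤ t → ∀ k : Fin d, ∫ ω, z t ω k ∂μ = 0 := by
    intro t ht k
    have := (EuclideanSpace.proj (𝕜 := ℝ) k).integral_comp_comm
      ((hL2 t).integrable one_le_two)
    simp only [hmean t ht, map_zero] at this
    simpa using this
  have hck : ∀ k : Fin d, ∫ ω, (x T ω k) ^ 2 ∂μ
      = (r ^ T * x0 k) ^ 2
        + ∑ s ∈ Finset.range T, (c s) ^ 2 * ∫ ω, (z (s + 1) ω k) ^ 2 ∂μ := by
    intro k
    set Y : ℕ → Ω → ℝ := fun s ω => c s * z (s + 1) ω k with hY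
    have hYL2 : ∀ s, MemLp (Y s) 2 μ := fun s => (hzkL2 (s + 1) k).const_mul _
    have hYindep : ∀ i j, i ≠ j → IndepFun (Y i) (Y j) μ := by
      intro i j hij
      have hzz : IndepFun (z (i + 1)) (z (j + 1)) μ := hindep.indepFun (by omega)
      exact hzz.comp
        (((EuclideanSpace.proj (𝕜 := ℝ) k).continuous.measurable).const_mul (c i))
        (((EuclideanSpace.proj (𝕜 := ℝ) k).continuous.measurable).const_mul (c j))
    have hYmean : ∀ s, ∫ ω, Y s ω ∂μ = 0 := by
      intro s
      simp only [hY]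
      rw [integral_const_mul, hzkmean (s + 1) (by omega) k, mul_zero]
    have hYsq : ∀ s, ∫ ω, (Y s ω) ^ 2 ∂μ = (c s) ^ 2 * ∫ ω, (z (s + 1) ω k) ^ 2 ∂μ := by
      intro s
      simp only [hY, mul_pow]
      rw [integral_const_mul]
    have hxk : ∀ ω, x T ω k = r ^ T * x0 k - ∑ s ∈ Finset.range T, Y s ω := by
      intro ω
      rw [key T ω]
      simp only [PiLp.sub_apply, PiLp.smul_apply, smul_eq_mul, hY]
      congr 1
      simp [Finset.sum_apply, hc]
    have hSL2 : MemLp (fun ω => ∑ s ∈ Finset.range T, Y s ω) 2 μ :=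
      memLp_finset_sum (Finset.range T) (fun s _ => hYL2 s)
    have hSint : Integrable (fun ω => ∑ s ∈ Finset.range T, Y s ω) μ :=
      hSL2.integrable one_le_two
    have hS2int : Integrable (fun ω => (∑ s ∈ Finset.range T, Y s ω) ^ 2) μ :=
      hSL2.integrable_sq
    have hSmean : ∫ ω, ∑ s ∈ Finset.range T, Y s ω ∂μ = 0 := by
      rw [integral_finset_sum _ (fun s _ => (hYL2 s).integrable one_le_two)]
      simp [hYmean]
    have hexp : ∀ ω, (x T ω k) ^ 2
        = (r ^ T * x0 k) ^ 2 + ((-(2 * (r ^ T * x0 k))) * (∑ s ∈ Finset.range T, Y s ω)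
            + (∑ s ∈ Finset.range T, Y s ω) ^ 2) := by
      intro ω; rw [hxk ω]; ring
    calc ∫ ω, (x T ω k) ^ 2 ∂μ
        = ∫ ω, ((r ^ T * x0 k) ^ 2
            + ((-(2 * (r ^ T * x0 k))) * (∑ s ∈ Finset.range T, Y s ω)
              + (∑ s ∈ Finset.range T, Y s ω) ^ 2)) ∂μ := by
          exact integral_congr_ae (Filter.Eventually.of_forall hexp)
      _ = (r ^ T * x0 k) ^ 2
            + ((-(2 * (r ^ T * x0 k))) * ∫ ω, (∑ s ∈ Finset.range T, Y s ω) ∂μ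
              + ∫ ω, (∑ s ∈ Finset.range T, Y s ω) ^ 2 ∂μ) := by
          have hint1 : Integrable (fun ω => (-(2 * (r ^ T * x0 k))) * (∑ s ∈ Finset.range T, Y s ω)
              + (∑ s ∈ Finset.range T, Y s ω) ^ 2) μ := (hSint.const_mul _).add hS2int
          have hint0 : Integrable (fun ω : Ω => (-(2 * (r ^ T * x0 k))) * (∑ s ∈ Finset.range T, Y s ω)) μ :=
            hSint.const_mul _
          rw [integral_add (integrable_const _) hint1, integral_add hint0 hS2int,
            integral_const_mul, integral_const]
          simp
      _ = (r ^ T * x0 k) ^ 2 + ∑ s ∈ Finset.range T, (c s) ^ 2 * ∫ ω, (z (s + 1) ω k) ^ 2 ∂μ := by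
          rw [hSmean, sum_sq_integral μ T Y hYL2 hYindep hYmean]
          simp [hYsq]
  -- membership and integrability of iterate coordinates
  have hxTL2 : MemLp (x T) 2 μ := by
    have hfx : x T = fun ω => (r ^ T) • x0
        - ∑ s ∈ Finset.range T, (γ * r ^ (T - 1 - s)) • z (s + 1) ω := funext (key T)
    rw [hfx]
    exact (memLp_const _).sub
      (memLp_finset_sum _ (fun s _ => ((hL2 (s + 1)).const_smul (γ * r ^ (T - 1 - s)))))
  have hxkL2 : ∀ k : Fin d, MemLp (fun ω => x T ω k) 2 μ :=
    fun k => (EuclideanSpace.proj (𝕜 := ℝ) k).comp_memLp' hxTL2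
  have hxk2int : ∀ k : Fin d, Integrable (fun ω => (x T ω k) ^ 2) μ :=
    fun k => (hxkL2 k).integrable_sq
  have hnormsq : ∀ v : EuclideanSpace ℝ (Fin d), ‖v‖ ^ 2 = ∑ k, (v k) ^ 2 := by
    intro v
    rw [EuclideanSpace.norm_eq, Real.sq_sqrt (by positivity)]
    simp [sq_abs]
  -- the noise second moments
  have hzvar : ∀ s : ℕ, ∑ k, ∫ ω, (z (s + 1) ω k) ^ 2 ∂μ = σ ^ 2 := by
    intro s
    rw [← integral_finset_sum _ (fun k _ => (hzkL2 (s + 1) k).integrable_sq)]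
    rw [← hvar (s + 1) (by omega)]
    exact integral_congr_ae (Filter.Eventually.of_forall fun ω => (hnormsq _).symm)
  -- total second moment of the final iterate
  have hE : ∫ ω, ‖x T ω‖ ^ 2 ∂μ
      = r ^ (2 * T) * ‖x0‖ ^ 2 + σ ^ 2 * ∑ s ∈ Finset.range T, (c s) ^ 2 := by
    have h0 : ∫ ω, ‖x T ω‖ ^ 2 ∂μ = ∑ k, ∫ ω, (x T ω k) ^ 2 ∂μ := by
      rw [← integral_finset_sum _ (fun k _ => hxk2int k)]
      exact integral_congr_ae (Filter.Eventually.of_forall fun ω => hnormsq _)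
    rw [h0]
    simp_rw [hck]
    rw [Finset.sum_add_distrib, Finset.sum_comm]
    congr 1
    · rw [hnormsq]
      rw [Finset.mul_sum]
      refine Finset.sum_congr rfl fun k _ => ?_
      rw [mul_pow, ← pow_mul, mul_comm T 2]
    · rw [Finset.mul_sum]
      refine Finset.sum_congr rfl fun s _ => ?_
      rw [← Finset.mul_sum, hzvar s]
      ring
  -- geometric sum identity
  have hrsq1 : r ^ 2 < 1 := by nlinarith
  have hdenpos : (0:ℝ) < 1 - r ^ 2 := by linarith
  have hgeom : ∑ s ∈ Finset.range T, (c s) ^ 2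
      = γ ^ 2 * ((1 - (r ^ 2) ^ T) / (1 - r ^ 2)) := by
    have h1 : ∀ s, (c s) ^ 2 = γ ^ 2 * (r ^ 2) ^ (T - 1 - s) := by
      intro s
      simp only [hc, mul_pow, ← pow_mul]
      rw [mul_comm (T - 1 - s) 2]
    simp_rw [h1]
    rw [← Finset.mul_sum]
    congr 1
    rw [Finset.sum_range_reflect (fun j => (r ^ 2) ^ j) T]
    rw [geom_sum_eq (by linarith : (r:ℝ) ^ 2 ≠ 1) T]
    rw [div_eq_div_iff (ne_of_lt (by nlinarith : r ^ 2 - 1 < 0)) (ne_of_gt hdenpos)]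
    ring
  -- bound on r^T
  have hrT : r ^ T ≤ 1 / 2 := by
    have he : r ≤ Real.exp (-(γ * L)) := by
      have := Real.add_one_le_exp (-(γ * L))
      simp only [hr]; linarith
    have h2 : r ^ T ≤ Real.exp (-(γ * L)) ^ T := pow_le_pow_left₀ hr0.le he T
    have h3 : Real.exp (-(γ * L)) ^ T = Real.exp (-(γ * L) * T) := by
      rw [← Real.exp_nat_mul]; ring_nf
    have h4 : Real.exp (-(γ * L) * T) ≤ Real.exp (-Real.log 2) := by
      apply Real.exp_le_exp.mpr
      have hpos : 0 < γ * L := mul_pos hγ hL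
      rw [ge_iff_le, div_le_iff₀ hpos] at hT
      nlinarith
    have h5 : Real.exp (-Real.log 2) = 1 / 2 := by
      rw [Real.exp_neg, Real.exp_log (by norm_num : (0:ℝ) < 2)]
      norm_num
    calc r ^ T ≤ Real.exp (-(γ * L)) ^ T := h2
      _ = Real.exp (-(γ * L) * T) := h3
      _ ≤ Real.exp (-Real.log 2) := h4
      _ = 1 / 2 := h5
  have hq : (r ^ 2) ^ T ≤ 1 / 2 := by
    have : (r ^ 2) ^ T = (r ^ T) ^ 2 := by rw [← pow_mul, ← pow_mul, mul_comm]
    rw [this]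
    nlinarith [pow_nonneg hr0.le T]
  -- lower bound on the geometric sum
  have hden : 1 - r ^ 2 ≤ 2 * (γ * L) := by simp only [hr]; nlinarith
  have hA : γ / (4 * L) ≤ γ ^ 2 * ((1 - (r ^ 2) ^ T) / (1 - r ^ 2)) := by
    have hstep : (1 / 2 : ℝ) / (2 * (γ * L)) ≤ (1 - (r ^ 2) ^ T) / (1 - r ^ 2) := by
      apply div_le_div₀ (by linarith) (by linarith) hdenpos hden
    have h6 : γ / (4 * L) = γ ^ 2 * ((1 / 2 : ℝ) / (2 * (γ * L))) := by
      field_simp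
      ring
    rw [h6]
    exact mul_le_mul_of_nonneg_left hstep (by positivity)
  -- put everything together
  have hint : ∫ ω, f (x T ω) ∂μ = (L / 2) * ∫ ω, ‖x T ω‖ ^ 2 ∂μ := by
    simp_rw [hf]
    rw [integral_const_mul]
  rw [hint, hE, sub_zero, hgeom]
  have hσ2 : (0:ℝ) ≤ σ ^ 2 := sq_nonneg σ
  have hmul : (L / 2) * (σ ^ 2 * (γ / (4 * L))) ≤
      (L / 2) * (σ ^ 2 * (γ ^ 2 * ((1 - (r ^ 2) ^ T) / (1 - r ^ 2)))) := by
    apply mul_le_mul_of_nonneg_left _ (by positivity)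
    exact mul_le_mul_of_nonneg_left hA hσ2
  have heq : (L / 2) * (σ ^ 2 * (γ / (4 * L))) = (1 / 8) * γ * σ ^ 2 := by
    field_simp
    ring
  rw [mul_add (L / 2)]
  have := heq ▸ hmul
  linarith
end

section
/- Consider anti-correlated perturbed gradient descent on f(x) = (L/2)‖x‖² in R^d with iterates x_{t+1} = (1 − γL)x_t − γ z_{t+1} + γ z_t (with z_0 = 0), where z_t are independent mean-zero random vectors with E‖z_t‖² = σ². Then for any T ≥ 1, E‖x_T‖² ≥ (1 − γL)^{2T}‖x_0‖² + γ²σ², and hence E[f(x_T)] − f* ≥ (L/2)[(1 − γL)^{2T}‖x_0‖² + γ²σ²]. -/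
open MeasureTheory ProbabilityTheory RealInnerProductSpace

lemma integral_inner_indep {Ω : Type*} [MeasurableSpace Ω] {μ : Measure Ω}
    [IsProbabilityMeasure μ] {d : ℕ}
    {X Y : Ω → EuclideanSpace ℝ (Fin d)} (hXY : IndepFun X Y μ)
    (hX : MemLp X 2 μ) (hY : MemLp Y 2 μ) :
    ∫ ω, ⟪X ω, Y ω⟫ ∂μ = ⟪∫ ω, X ω ∂μ, ∫ ω, Y ω ∂μ⟫ := by
  have hXint : Integrable X μ := hX.integrable one_le_two
  have hYint : Integrable Y μ := hY.integrable one_le_two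
  have hXi : ∀ i, Integrable (fun ω => X ω i) μ := fun i =>
    ((EuclideanSpace.proj i : EuclideanSpace ℝ (Fin d) →L[ℝ] ℝ).comp_memLp' hX).integrable
      one_le_two
  have hYi : ∀ i, Integrable (fun ω => Y ω i) μ := fun i =>
    ((EuclideanSpace.proj i : EuclideanSpace ℝ (Fin d) →L[ℝ] ℝ).comp_memLp' hY).integrable
      one_le_two
  have hind : ∀ i : Fin d, IndepFun (fun ω => X ω i) (fun ω => Y ω i) μ := fun i =>
    hXY.comp (φ := fun v : EuclideanSpace ℝ (Fin d) => v i)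
      (ψ := fun v : EuclideanSpace ℝ (Fin d) => v i) (by fun_prop) (by fun_prop)
  have hmuli : ∀ i : Fin d, Integrable (fun ω => X ω i * Y ω i) μ := fun i =>
    (hind i).integrable_mul (hXi i) (hYi i)
  simp only [PiLp.inner_apply, RCLike.inner_apply, conj_trivial]
  have hc : ∀ ω i, (Y ω).ofLp i * (X ω).ofLp i = (X ω).ofLp i * (Y ω).ofLp i :=
    fun _ _ => mul_comm _ _
  have hc' : ∀ i, (∫ ω, Y ω ∂μ).ofLp i * (∫ ω, X ω ∂μ).ofLp i =
      (∫ ω, X ω ∂μ).ofLp i * (∫ ω, Y ω ∂μ).ofLp i := fun _ => mul_comm _ _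
  simp only [hc, hc']
  rw [integral_finset_sum _ (fun i _ => hmuli i)]
  refine Finset.sum_congr rfl fun i _ => ?_
  have h1 : ∫ ω, X ω i * Y ω i ∂μ = (∫ ω, X ω i ∂μ) * ∫ ω, Y ω i ∂μ :=
    (hind i).integral_mul_eq_mul_integral (hXi i).aestronglyMeasurable (hYi i).aestronglyMeasurable
  have h2 : ∫ ω, X ω i ∂μ = (∫ ω, X ω ∂μ) i := by
    have := (EuclideanSpace.proj i : EuclideanSpace ℝ (Fin d) →L[ℝ] ℝ).integral_comp_comm hXint
    simpa using this
  have h3 : ∫ ω, Y ω i ∂μ = (∫ ω, Y ω ∂μ) i := by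
    have := (EuclideanSpace.proj i : EuclideanSpace ℝ (Fin d) →L[ℝ] ℝ).integral_comp_comm hYint
    simpa using this
  rw [h1, h2, h3]

/-- Noise lower bound for Anti-PGD on `f(x) = (L/2)‖x‖²`: for iterates
`x_{t+1} = (1 − γL) x_t − γ z_{t+1} + γ z_t` with `z_0 = 0` and independent
mean-zero noise of second moment `σ²`, for any `T ≥ 1`,
`E‖x_T‖² ≥ (1 − γL)^{2T}‖x_0‖² + γ²σ²`, hence
`E[f(x_T)] − f* ≥ (L/2)[(1 − γL)^{2T}‖x_0‖² + γ²σ²]` (here `f* = 0`). -/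
theorem anti_pgd_noise_lower_bound
    {Ω : Type*} [MeasurableSpace Ω] (μ : Measure Ω) [IsProbabilityMeasure μ]
    (d : ℕ) (γ L σ : ℝ) (hγ : 0 < γ) (hL : 0 < L) (h1 : γ * L < 1) (hσ : 0 ≤ σ)
    (f : EuclideanSpace ℝ (Fin d) → ℝ)
    (hf : ∀ y, f y = (L / 2) * ‖y‖ ^ 2)
    (z : ℕ → Ω → EuclideanSpace ℝ (Fin d))
    (hz0 : ∀ ω, z 0 ω = 0)
    (hmeas : ∀ t, Measurable (z t))
    (hindep : iIndepFun z μ)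
    (hL2 : ∀ t, MemLp (z t) 2 μ)
    (hmean : ∀ t, 1 ≤ t → ∫ ω, z t ω ∂μ = 0)
    (hvar : ∀ t, 1 ≤ t → ∫ ω, ‖z t ω‖ ^ 2 ∂μ = σ ^ 2)
    (x0 : EuclideanSpace ℝ (Fin d)) (x : ℕ → Ω → EuclideanSpace ℝ (Fin d))
    (hx0 : ∀ ω, x 0 ω = x0)
    (hrec : ∀ t ω, x (t + 1) ω = (1 - γ * L) • x t ω - γ • z (t + 1) ω + γ • z t ω)
    (T : ℕ) (hT : 1 ≤ T) :
    (1 - γ * L) ^ (2 * T) * ‖x0‖ ^ 2 + γ ^ 2 * σ ^ 2 ≤ ∫ ω, ‖x T ω‖ ^ 2 ∂μ ∧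
      (L / 2) * ((1 - γ * L) ^ (2 * T) * ‖x0‖ ^ 2 + γ ^ 2 * σ ^ 2) ≤
        ∫ ω, f (x T ω) ∂μ - 0 := by
  set a : ℝ := 1 - γ * L with ha_def
  have ha0 : 0 < a := by simp only [ha_def]; linarith
  set c : ℝ := γ ^ 2 * L with hc_def
  set u : ℕ → Ω → EuclideanSpace ℝ (Fin d) := fun t ω => x t ω + γ • z t ω with hu_def
  -- basic facts
  have hu0 : ∀ ω, u 0 ω = x0 := by intro ω; simp [hu_def, hx0, hz0]
  have hu_rec : ∀ t ω, u (t + 1) ω = a • u t ω + c • z t ω := by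
    intro t ω
    simp only [hu_def, hrec, ha_def, hc_def]
    module
  have hx_eq : ∀ t ω, x t ω = u t ω - γ • z t ω := by
    intro t ω; simp [hu_def]
  -- measurability
  have hx_meas : ∀ t, Measurable (x t) := by
    intro t
    induction t with
    | zero =>
      have : x 0 = fun _ => x0 := funext hx0
      rw [this]; exact measurable_const
    | succ t ih =>
      have : x (t + 1) = fun ω => a • x t ω - γ • z (t + 1) ω + γ • z t ω := funext (hrec t)
      rw [this]
      exact ((ih.const_smul a).sub ((hmeas (t + 1)).const_smul γ)).add ((hmeas t).const_smul γ)
  have hu_meas : ∀ t, Measurable (u t) := fun t =>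
    (hx_meas t).add ((hmeas t).const_smul γ)
  -- L2
  have hu_L2 : ∀ t, MemLp (u t) 2 μ := by
    intro t
    induction t with
    | zero =>
      have : u 0 = fun _ => x0 := funext hu0
      rw [this]; exact memLp_const x0
    | succ t ih =>
      have : u (t + 1) = fun ω => a • u t ω + c • z t ω := funext (hu_rec t)
      rw [this]
      exact (ih.const_smul a).add ((hL2 t).const_smul c)
  have hu_int : ∀ t, Integrable (u t) μ := fun t => (hu_L2 t).integrable one_le_two
  have hz_int : ∀ t, Integrable (z t) μ := fun t => (hL2 t).integrable one_le_two
  -- mean of z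
  have hz_mean : ∀ t, ∫ ω, z t ω ∂μ = 0 := by
    intro t
    cases t with
    | zero => simp [hz0]
    | succ t => exact hmean (t + 1) (Nat.succ_le_succ (Nat.zero_le _))
  -- mean of u
  have hu_mean : ∀ t, ∫ ω, u t ω ∂μ = a ^ t • x0 := by
    intro t
    induction t with
    | zero => simp [hu0]
    | succ t ih =>
      have heq : ∀ ω, u (t + 1) ω = a • u t ω + c • z t ω := hu_rec t
      calc ∫ ω, u (t + 1) ω ∂μ = ∫ ω, (a • u t ω + c • z t ω) ∂μ := by
            exact integral_congr_ae (Filter.Eventually.of_forall heq)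
        _ = a • ∫ ω, u t ω ∂μ + c • ∫ ω, z t ω ∂μ := by
            have ha' : Integrable (fun ω => a • u t ω) μ := (hu_int t).smul a
            have hb' : Integrable (fun ω => c • z t ω) μ := (hz_int t).smul c
            rw [integral_add ha' hb', integral_smul, integral_smul]
        _ = a ^ (t + 1) • x0 := by
            rw [ih, hz_mean, smul_zero, add_zero, smul_smul, ← pow_succ']
  -- representation of u
  have hrep : ∀ t ω, u t ω = a ^ t • x0 +
      ∑ s ∈ Finset.range t, (c * a ^ (t - 1 - s)) • z s ω := by
    intro t
    induction t with
    | zero => intro ω; simp [hu0]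
    | succ t ih =>
      intro ω
      rw [hu_rec t ω, ih ω, Finset.sum_range_succ]
      have hterm : ∀ s ∈ Finset.range t,
          (c * a ^ (t + 1 - 1 - s)) • z s ω = a • ((c * a ^ (t - 1 - s)) • z s ω) := by
        intro s hs
        have hs' : s < t := Finset.mem_range.mp hs
        rw [smul_smul]
        congr 1
        have h2 : t + 1 - 1 - s = (t - 1 - s) + 1 := by omega
        rw [h2, pow_succ]
        ring
      rw [Finset.sum_congr rfl hterm, ← Finset.smul_sum]
      have h0 : t + 1 - 1 - t = 0 := by omega
      rw [h0, pow_zero, mul_one, smul_add, smul_smul, ← pow_succ']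
      abel
  -- independence of u T and z T
  have hindep2 : IndepFun (u T) (z T) μ := by
    set g : ℕ → Ω → EuclideanSpace ℝ (Fin d) := fun s ω =>
      (if s = T then (1 : ℝ) else c * a ^ (T - 1 - s)) • z s ω with hg_def
    have hφmeas : ∀ s, Measurable (fun v : EuclideanSpace ℝ (Fin d) =>
        (if s = T then (1 : ℝ) else c * a ^ (T - 1 - s)) • v) := fun s =>
      measurable_const_smul _
    have hg_indep : iIndepFun g μ :=
      hindep.comp (fun s v => (if s = T then (1 : ℝ) else c * a ^ (T - 1 - s)) • v) hφmeas
    have hg_meas : ∀ s, Measurable (g s) := fun s => by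
      exact (measurable_const_smul _).comp (hmeas s)
    have hsum : IndepFun (∑ j ∈ Finset.range T, g j) (g T) μ :=
      hg_indep.indepFun_sum_range_succ hg_meas T
    have h2 : IndepFun (fun ω => a ^ T • x0 + (∑ j ∈ Finset.range T, g j) ω)
        ((id : EuclideanSpace ℝ (Fin d) → _) ∘ g T) μ :=
      hsum.comp (measurable_id.const_add (a ^ T • x0)) measurable_id
    have hgT : (id ∘ g T) = z T := by
      funext ω; simp [hg_def]
    have huT : u T = fun ω => a ^ T • x0 + (∑ j ∈ Finset.range T, g j) ω := by
      funext ω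
      rw [hrep T ω]
      congr 1
      simp only [Finset.sum_apply]
      refine Finset.sum_congr rfl fun s hs => ?_
      have : s ≠ T := by have := Finset.mem_range.mp hs; omega
      simp [hg_def, this]
    rw [hgT, ← huT] at h2
    exact h2
  -- cross term vanishes
  have hcross : ∫ ω, ⟪u T ω, z T ω⟫ ∂μ = 0 := by
    rw [integral_inner_indep hindep2 (hu_L2 T) (hL2 T), hmean T hT]
    simp
  -- pointwise expansion
  have hpt : ∀ ω, ‖x T ω‖ ^ 2 =
      ‖u T ω‖ ^ 2 - (2 * γ) * ⟪u T ω, z T ω⟫ + γ ^ 2 * ‖z T ω‖ ^ 2 := by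
    intro ω
    rw [hx_eq T ω, norm_sub_sq_real, real_inner_smul_right, norm_smul]
    simp [mul_pow, sq_abs]
    ring
  -- integrability pieces
  have hInt_u2 : Integrable (fun ω => ‖u T ω‖ ^ 2) μ := (hu_L2 T).norm.integrable_sq
  have hInt_z2 : Integrable (fun ω => ‖z T ω‖ ^ 2) μ := (hL2 T).norm.integrable_sq
  have hInt_inner : Integrable (fun ω => ⟪u T ω, z T ω⟫) μ := by
    have h := L2.integrable_inner (𝕜 := ℝ) ((hu_L2 T).toLp _) ((hL2 T).toLp _)
    refine h.congr ?_
    filter_upwards [(hu_L2 T).coeFn_toLp, (hL2 T).coeFn_toLp] with ω h1 h2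
    rw [h1, h2]
  -- integral of ‖x T‖²
  have hmain : ∫ ω, ‖x T ω‖ ^ 2 ∂μ = (∫ ω, ‖u T ω‖ ^ 2 ∂μ) + γ ^ 2 * σ ^ 2 := by
    calc ∫ ω, ‖x T ω‖ ^ 2 ∂μ
        = ∫ ω, (‖u T ω‖ ^ 2 - (2 * γ) * ⟪u T ω, z T ω⟫ + γ ^ 2 * ‖z T ω‖ ^ 2) ∂μ :=
          integral_congr_ae (Filter.Eventually.of_forall hpt)
      _ = (∫ ω, (‖u T ω‖ ^ 2 - (2 * γ) * ⟪u T ω, z T ω⟫) ∂μ)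
            + ∫ ω, γ ^ 2 * ‖z T ω‖ ^ 2 ∂μ := by
          exact integral_add (hInt_u2.sub (hInt_inner.const_mul (2 * γ)))
            (hInt_z2.const_mul (γ ^ 2))
      _ = (∫ ω, ‖u T ω‖ ^ 2 ∂μ) - (2 * γ) * ∫ ω, ⟪u T ω, z T ω⟫ ∂μ
            + γ ^ 2 * ∫ ω, ‖z T ω‖ ^ 2 ∂μ := by
          rw [integral_sub hInt_u2 (hInt_inner.const_mul (2 * γ)), integral_const_mul,
            integral_const_mul]
      _ = (∫ ω, ‖u T ω‖ ^ 2 ∂μ) + γ ^ 2 * σ ^ 2 := by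
          rw [hcross, hvar T hT]; ring
  -- lower bound on ∫ ‖u T‖²
  have hlb : a ^ (2 * T) * ‖x0‖ ^ 2 ≤ ∫ ω, ‖u T ω‖ ^ 2 ∂μ := by
    have hmem : MemLp (fun ω => ‖u T ω‖) 2 μ := (hu_L2 T).norm
    have hvnn := variance_nonneg (fun ω => ‖u T ω‖) μ
    rw [variance_eq_sub hmem] at hvnn
    have h1' : (∫ ω, ‖u T ω‖ ∂μ) ^ 2 ≤ ∫ ω, ‖u T ω‖ ^ 2 ∂μ := by
      have : (μ[(fun ω => ‖u T ω‖) ^ 2] : ℝ) = ∫ ω, ‖u T ω‖ ^ 2 ∂μ := by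
        simp [Pi.pow_apply]
      linarith [hvnn, this]
    have h2' : ‖∫ ω, u T ω ∂μ‖ ≤ ∫ ω, ‖u T ω‖ ∂μ := norm_integral_le_integral_norm _
    have h3' : ‖∫ ω, u T ω ∂μ‖ ^ 2 ≤ (∫ ω, ‖u T ω‖ ∂μ) ^ 2 := by
      exact pow_le_pow_left₀ (norm_nonneg _) h2' 2
    have h4' : ‖∫ ω, u T ω ∂μ‖ ^ 2 = a ^ (2 * T) * ‖x0‖ ^ 2 := by
      rw [hu_mean T, norm_smul, mul_pow, Real.norm_eq_abs,
        abs_of_pos (pow_pos ha0 T), ← pow_mul, mul_comm T 2]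
    linarith
  have key : a ^ (2 * T) * ‖x0‖ ^ 2 + γ ^ 2 * σ ^ 2 ≤ ∫ ω, ‖x T ω‖ ^ 2 ∂μ := by
    rw [hmain]; linarith
  refine ⟨key, ?_⟩
  have hfx : ∫ ω, f (x T ω) ∂μ = (L / 2) * ∫ ω, ‖x T ω‖ ^ 2 ∂μ := by
    simp_rw [hf]
    exact integral_const_mul _ _
  rw [sub_zero, hfx]
  exact mul_le_mul_of_nonneg_left key (by linarith)
end

section
/- Let f : R^d → R be differentiable, convex, L-smooth, with minimizer x*. Consider iterates x_{t+1} = x_t − γ(∇f(x_t) + z_{t+1}) where z_{t+1} is a random vector independent of x_t with E[z_{t+1}] = 0 and E‖z_{t+1}‖² ≤ σ². If 0 < γ < 1/(2L), then E‖x_{t+1} − x*‖² ≤ E‖x_t − x*‖² − γ E[f(x_t) − f*] + γ²σ², and consequently (1/(T+1)) Σ_{t=0}^T E[f(x_t) − f*] ≤ ‖x_0 − x*‖²/(γ(T+1)) + γσ². -/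
open MeasureTheory ProbabilityTheory Finset


lemma pgd_descent {d : ℕ} {f : EuclideanSpace ℝ (Fin d) → ℝ}
    {g : EuclideanSpace ℝ (Fin d) → EuclideanSpace ℝ (Fin d)}
    (hgrad : ∀ y, HasGradientAt f (g y) y) {L : ℝ} (hL : 0 < L)
    (hsmooth : ∀ y w, ‖g y - g w‖ ≤ L * ‖y - w‖) (hgc : Continuous g)
    (y w : EuclideanSpace ℝ (Fin d)) :
    f w ≤ f y + (inner ℝ (g y) (w - y) : ℝ) + L / 2 * ‖w - y‖ ^ 2 := by
  set c := w - y with hc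
  have hφ : ∀ t : ℝ, HasDerivAt (fun s : ℝ => f (y + s • c))
      ((inner ℝ (g (y + t • c)) c : ℝ)) t := by
    intro t
    have hline : HasDerivAt (fun s : ℝ => y + s • c) c t := by
      simpa using ((hasDerivAt_id t).smul_const c).const_add y
    have := ((hgrad (y + t • c)).hasFDerivAt.comp_hasDerivAt t hline)
    simp [InnerProductSpace.toDual_apply_apply] at this
    exact this
  have hcont : Continuous fun t : ℝ => (inner ℝ (g (y + t • c)) c : ℝ) := by
    exact (hgc.comp (by continuity)).inner continuous_const
  have hFTC : ∫ t in (0:ℝ)..1, (inner ℝ (g (y + t • c)) c : ℝ) =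
      f (y + (1:ℝ) • c) - f (y + (0:ℝ) • c) :=
    intervalIntegral.integral_eq_sub_of_hasDerivAt (fun t _ => hφ t)
      (hcont.intervalIntegrable 0 1)
  have hbound : ∫ t in (0:ℝ)..1, (inner ℝ (g (y + t • c)) c : ℝ) ≤
      ∫ t in (0:ℝ)..1, ((inner ℝ (g y) c : ℝ) + L * t * ‖c‖ ^ 2) := by
    apply intervalIntegral.integral_mono_on zero_le_one (hcont.intervalIntegrable 0 1)
      (((by fun_prop : Continuous fun t : ℝ => (inner ℝ (g y) c : ℝ) + L * t * ‖c‖ ^ 2)).intervalIntegrable 0 1)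
    intro t ht
    have h1 : (inner ℝ (g (y + t • c)) c : ℝ) - (inner ℝ (g y) c : ℝ)
        = (inner ℝ (g (y + t • c) - g y) c : ℝ) := by rw [inner_sub_left]
    have h2 : (inner ℝ (g (y + t • c) - g y) c : ℝ) ≤ ‖g (y + t • c) - g y‖ * ‖c‖ :=
      real_inner_le_norm _ _
    have h3 : ‖g (y + t • c) - g y‖ ≤ L * ‖t • c‖ := by
      have := hsmooth (y + t • c) y
      simpa using this
    have h4 : ‖t • c‖ = t * ‖c‖ := by
      rw [norm_smul, Real.norm_eq_abs, abs_of_nonneg ht.1]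
    rw [h4] at h3
    have h5 := mul_le_mul_of_nonneg_right h3 (norm_nonneg c)
    nlinarith [h1, h2, h5]
  have hint : ∫ t in (0:ℝ)..1, ((inner ℝ (g y) c : ℝ) + L * t * ‖c‖ ^ 2)
      = (inner ℝ (g y) c : ℝ) + L / 2 * ‖c‖ ^ 2 := by
    rw [intervalIntegral.integral_add (intervalIntegrable_const)
      (((by fun_prop : Continuous fun t : ℝ => L * t * ‖c‖ ^ 2)).intervalIntegrable 0 1)]
    simp only [intervalIntegral.integral_const, smul_eq_mul]
    have : ∫ t in (0:ℝ)..1, L * t * ‖c‖ ^ 2 = L / 2 * ‖c‖ ^ 2 := by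
      have : (fun t : ℝ => L * t * ‖c‖ ^ 2) = fun t : ℝ => (L * ‖c‖ ^ 2) * t := by
        funext t; ring
      rw [this, intervalIntegral.integral_const_mul, integral_id]
      ring
    rw [this]; ring
  have h10 : y + (1:ℝ) • c = w := by rw [one_smul, hc]; abel
  have h00 : y + (0:ℝ) • c = y := by rw [zero_smul, add_zero]
  rw [h10, h00] at hFTC
  linarith [hbound.trans_eq hint, hFTC.symm.le, hFTC.le]


lemma pgd_gradsq {d : ℕ} {f : EuclideanSpace ℝ (Fin d) → ℝ}
    {g : EuclideanSpace ℝ (Fin d) → EuclideanSpace ℝ (Fin d)} {L : ℝ} (hL : 0 < L)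
    (hdesc : ∀ y w, f w ≤ f y + (inner ℝ (g y) (w - y) : ℝ) + L / 2 * ‖w - y‖ ^ 2)
    {xstar : EuclideanSpace ℝ (Fin d)} (hmin : ∀ y, f xstar ≤ f y)
    (y : EuclideanSpace ℝ (Fin d)) :
    ‖g y‖ ^ 2 ≤ 2 * L * (f y - f xstar) := by
  have h := hdesc y (y - L⁻¹ • g y)
  have h1 : y - L⁻¹ • g y - y = -(L⁻¹ • g y) := by abel
  rw [h1] at h
  have h2 : (inner ℝ (g y) (-(L⁻¹ • g y)) : ℝ) = -(L⁻¹ * ‖g y‖ ^ 2) := by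
    rw [inner_neg_right, real_inner_smul_right, real_inner_self_eq_norm_sq]
  have h3 : ‖-(L⁻¹ • g y)‖ ^ 2 = L⁻¹ ^ 2 * ‖g y‖ ^ 2 := by
    rw [norm_neg, norm_smul, Real.norm_eq_abs, mul_pow, sq_abs]
  rw [h2, h3] at h
  have h4 := hmin (y - L⁻¹ • g y)
  have hL' : L ≠ 0 := ne_of_gt hL
  have : f xstar ≤ f y - ‖g y‖ ^ 2 / (2 * L) := by
    have e : f y + -(L⁻¹ * ‖g y‖ ^ 2) + L / 2 * (L⁻¹ ^ 2 * ‖g y‖ ^ 2)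
        = f y - ‖g y‖ ^ 2 / (2 * L) := by field_simp; ring
    linarith [h4.trans (h.trans_eq e)]
  have h2L : 0 < 2 * L := by linarith
  have := (div_le_iff₀ h2L).mp (by linarith : ‖g y‖ ^ 2 / (2 * L) ≤ f y - f xstar)
  linarith

lemma pgd_mul_int {Ω : Type*} [MeasurableSpace Ω] {μ : Measure Ω}
    {X Y : Ω → ℝ} (hX : MemLp X 2 μ) (hY : MemLp Y 2 μ) :
    Integrable (fun ω => X ω * Y ω) μ := by
  have h1 : Integrable (fun ω => X ω ^ 2) μ := hX.integrable_sq
  have h2 : Integrable (fun ω => Y ω ^ 2) μ := hY.integrable_sq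
  refine ((h1.add h2).const_mul (1/2)).mono' (hX.1.mul hY.1) ?_
  filter_upwards with ω
  simp only [Real.norm_eq_abs, abs_mul, Pi.add_apply]
  nlinarith [abs_nonneg (X ω), abs_nonneg (Y ω), sq_abs (X ω), sq_abs (Y ω),
    sq_nonneg (|X ω| - |Y ω|)]

lemma pgd_inner_int {Ω : Type*} [MeasurableSpace Ω] {μ : Measure Ω} {d : ℕ}
    {X Y : Ω → EuclideanSpace ℝ (Fin d)} (hX : MemLp X 2 μ) (hY : MemLp Y 2 μ) :
    Integrable (fun ω => (inner ℝ (X ω) (Y ω) : ℝ)) μ := by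
  have h1 : Integrable (fun ω => ‖X ω‖ ^ 2) μ := (memLp_two_iff_integrable_sq_norm hX.1).1 hX
  have h2 : Integrable (fun ω => ‖Y ω‖ ^ 2) μ := (memLp_two_iff_integrable_sq_norm hY.1).1 hY
  refine ((h1.add h2).const_mul (1/2)).mono' (hX.1.inner hY.1) ?_
  filter_upwards with ω
  have h := abs_real_inner_le_norm (X ω) (Y ω)
  simp only [Real.norm_eq_abs, Pi.add_apply]
  nlinarith [norm_nonneg (X ω), norm_nonneg (Y ω), sq_nonneg (‖X ω‖ - ‖Y ω‖)]

lemma pgd_inner_zero {Ω : Type*} [MeasurableSpace Ω] {μ : Measure Ω} [IsProbabilityMeasure μ]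
    {d : ℕ} {X Y : Ω → EuclideanSpace ℝ (Fin d)} (hind : IndepFun X Y μ)
    (hX : MemLp X 2 μ) (hY : MemLp Y 2 μ) (hY0 : ∫ ω, Y ω ∂μ = 0) :
    ∫ ω, (inner ℝ (X ω) (Y ω) : ℝ) ∂μ = 0 := by
  have hrw : (fun ω => (inner ℝ (X ω) (Y ω) : ℝ)) = fun ω => ∑ i, X ω i * Y ω i := by
    funext ω
    simp [PiLp.inner_apply, RCLike.inner_apply, mul_comm]
  have hXi : ∀ i, MemLp (fun ω => X ω i) 2 μ := fun i => by
    have h := (EuclideanSpace.proj (𝕜 := ℝ) i).comp_memLp' hX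
    simp [Function.comp] at h
    exact h
  have hYi : ∀ i, MemLp (fun ω => Y ω i) 2 μ := fun i => by
    have h := (EuclideanSpace.proj (𝕜 := ℝ) i).comp_memLp' hY
    simp [Function.comp] at h
    exact h
  rw [hrw, integral_finset_sum _ (fun i _ => pgd_mul_int (hXi i) (hYi i))]
  refine Finset.sum_eq_zero fun i _ => ?_
  have hmeas : Measurable fun v : EuclideanSpace ℝ (Fin d) => v i :=
    (EuclideanSpace.proj (𝕜 := ℝ) i).continuous.measurable
  have h := (hind.comp hmeas hmeas).integral_fun_mul_eq_mul_integral (hXi i).1 (hYi i).1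
  have hYint : Integrable Y μ := hY.integrable one_le_two
  have hYi0 : ∫ ω, Y ω i ∂μ = 0 := by
    have := (EuclideanSpace.proj (𝕜 := ℝ) i).integral_comp_comm hYint
    simp only [PiLp.proj_apply] at this
    rw [this, hY0]
    simp
  simp only [Function.comp] at h
  rw [h]
  exact mul_eq_zero_of_right _ hYi0

/-- PGD convergence rate: for `f` convex, `L`-smooth with minimizer `x*`, iterates
`x_{t+1} = x_t − γ(∇f(x_t) + z_{t+1})` with independent mean-zero noise of second
moment `≤ σ²` and `0 < γ < 1/(2L)` satisfy the one-step descent inequality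
`E‖x_{t+1} − x*‖² ≤ E‖x_t − x*‖² − γE[f(x_t) − f*] + γ²σ²` and consequently
`(1/(T+1)) ∑_{t=0}^T E[f(x_t) − f*] ≤ ‖x_0 − x*‖²/(γ(T+1)) + γσ²`. -/
theorem pgd_convergence
    {Ω : Type*} [MeasurableSpace Ω] (μ : Measure Ω) [IsProbabilityMeasure μ]
    (d : ℕ) (f : EuclideanSpace ℝ (Fin d) → ℝ)
    (g : EuclideanSpace ℝ (Fin d) → EuclideanSpace ℝ (Fin d))
    (hgrad : ∀ y, HasGradientAt f (g y) y)
    (hconvex : ∀ y w, f y + (inner ℝ (g y) (w - y) : ℝ) ≤ f w)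
    (L : ℝ) (hL : 0 < L)
    (hsmooth : ∀ y w, ‖g y - g w‖ ≤ L * ‖y - w‖)
    (xstar : EuclideanSpace ℝ (Fin d)) (hmin : ∀ y, f xstar ≤ f y)
    (γ σ : ℝ) (hγ : 0 < γ) (hγL : γ < 1 / (2 * L)) (hσ : 0 ≤ σ)
    (z : ℕ → Ω → EuclideanSpace ℝ (Fin d))
    (hmeas : ∀ t, Measurable (z t))
    (hindep : iIndepFun z μ)
    (hL2 : ∀ t, MemLp (z t) 2 μ)
    (hmean : ∀ t, 1 ≤ t → ∫ ω, z t ω ∂μ = 0)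
    (hvar : ∀ t, 1 ≤ t → ∫ ω, ‖z t ω‖ ^ 2 ∂μ ≤ σ ^ 2)
    (x0 : EuclideanSpace ℝ (Fin d)) (x : ℕ → Ω → EuclideanSpace ℝ (Fin d))
    (hx0 : ∀ ω, x 0 ω = x0)
    (hrec : ∀ t ω, x (t + 1) ω = x t ω - γ • (g (x t ω) + z (t + 1) ω))
    (hint_f : ∀ t, Integrable (fun ω => f (x t ω)) μ)
    (hint_x : ∀ t, Integrable (fun ω => ‖x t ω - xstar‖ ^ 2) μ)
    (T : ℕ) :
    (∀ t, ∫ ω, ‖x (t + 1) ω - xstar‖ ^ 2 ∂μ ≤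
        ∫ ω, ‖x t ω - xstar‖ ^ 2 ∂μ
          - γ * (∫ ω, (f (x t ω) - f xstar) ∂μ) + γ ^ 2 * σ ^ 2) ∧
      (1 / ((T : ℝ) + 1)) * ∑ t ∈ Finset.range (T + 1), ∫ ω, (f (x t ω) - f xstar) ∂μ ≤
        ‖x0 - xstar‖ ^ 2 / (γ * ((T : ℝ) + 1)) + γ * σ ^ 2 := by
  classical
  have hgc : Continuous g := by
    have hlip : LipschitzWith (Real.toNNReal L) g := by
      apply LipschitzWith.of_dist_le_mul
      intro a b
      rw [dist_eq_norm, dist_eq_norm]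
      calc ‖g a - g b‖ ≤ L * ‖a - b‖ := hsmooth a b
        _ = Real.toNNReal L * ‖a - b‖ := by rw [Real.coe_toNNReal L hL.le]
    exact hlip.continuous
  have hxmeas : ∀ t, Measurable (x t) := by
    intro t
    induction t with
    | zero =>
      have : x 0 = fun _ => x0 := funext hx0
      rw [this]; exact measurable_const
    | succ n ih =>
      have : x (n+1) = fun ω => x n ω - γ • (g (x n ω) + z (n+1) ω) := funext (hrec n)
      rw [this]
      exact ih.sub (((hgc.measurable.comp ih).add (hmeas (n+1))).const_smul γ)
  have hdesc := fun y w => pgd_descent hgrad hL hsmooth hgc y w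
  have hgs := pgd_gradsq hL hdesc hmin
  have hfnn : ∀ t ω, 0 ≤ f (x t ω) - f xstar := fun t ω => sub_nonneg.2 (hmin _)
  have hintf : ∀ t, Integrable (fun ω => f (x t ω) - f xstar) μ :=
    fun t => (hint_f t).sub (integrable_const _)
  have hXm : ∀ t, MemLp (fun ω => x t ω - xstar) 2 μ := fun t =>
    (memLp_two_iff_integrable_sq_norm
      (((hxmeas t).sub measurable_const).aestronglyMeasurable)).2 (hint_x t)
  have hGm : ∀ t, MemLp (fun ω => g (x t ω)) 2 μ := by
    intro t
    have hm : AEStronglyMeasurable (fun ω => g (x t ω)) μ :=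
      (hgc.measurable.comp (hxmeas t)).aestronglyMeasurable
    refine (memLp_two_iff_integrable_sq_norm hm).2 ?_
    refine ((hintf t).const_mul (2*L)).mono'
      ((hgc.measurable.comp (hxmeas t)).norm.pow_const 2).aestronglyMeasurable ?_
    filter_upwards with ω
    have h1 := hgs (x t ω)
    rw [Real.norm_eq_abs, abs_of_nonneg (by positivity)]
    exact h1
  -- independence of x t and z (t+1)
  have key : ∀ t : ℕ, ∃ Φ : ((Finset.range (t+1) : Finset ℕ) → EuclideanSpace ℝ (Fin d)) →
      EuclideanSpace ℝ (Fin d), Measurable Φ ∧ ∀ ω, x t ω = Φ (fun i => z i ω) := by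
    intro t
    induction t with
    | zero => exact ⟨fun _ => x0, measurable_const, fun ω => hx0 ω⟩
    | succ n ih =>
      obtain ⟨Φ, hΦm, hΦ⟩ := ih
      have hmem : ∀ i : (Finset.range (n+1) : Finset ℕ), (i : ℕ) ∈ Finset.range (n+2) := by
        intro i
        have := Finset.mem_range.mp i.2
        exact Finset.mem_range.mpr (by omega)
      have hmem2 : (n+1) ∈ Finset.range (n+2) := Finset.mem_range.mpr (by omega)
      set r : ((Finset.range (n+2) : Finset ℕ) → EuclideanSpace ℝ (Fin d)) →
          ((Finset.range (n+1) : Finset ℕ) → EuclideanSpace ℝ (Fin d)) :=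
        fun v i => v ⟨i, hmem i⟩ with hr
      have hrm : Measurable r :=
        measurable_pi_lambda _ (fun i => measurable_pi_apply _)
      refine ⟨fun v => Φ (r v) - γ • (g (Φ (r v)) + v ⟨n+1, hmem2⟩), ?_, ?_⟩
      · exact (hΦm.comp hrm).sub
          (((hgc.measurable.comp (hΦm.comp hrm)).add (measurable_pi_apply _)).const_smul γ)
      · intro ω
        rw [hrec n ω, hΦ ω]
  have hIndep : ∀ t, IndepFun (x t) (z (t+1)) μ := by
    intro t
    obtain ⟨Φ, hΦm, hΦ⟩ := key t
    have hdisj : Disjoint (Finset.range (t+1)) ({t+1} : Finset ℕ) := by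
      simp [Finset.disjoint_singleton_right]
    have h := hindep.indepFun_finset (Finset.range (t+1)) {t+1} hdisj hmeas
    have h2 := h.comp hΦm
      (measurable_pi_apply (⟨t+1, Finset.mem_singleton_self _⟩ : ({t+1} : Finset ℕ)))
    have e1 : (Φ ∘ fun ω (i : (Finset.range (t+1) : Finset ℕ)) => z i ω) = x t := by
      funext ω; exact (hΦ ω).symm
    have e2 : ((fun v : ({t+1} : Finset ℕ) → EuclideanSpace ℝ (Fin d) =>
        v ⟨t+1, Finset.mem_singleton_self _⟩) ∘ fun ω (i : ({t+1} : Finset ℕ)) => z i ω)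
        = z (t+1) := rfl
    rw [e1, e2] at h2
    exact h2
  -- one-step inequality
  have step : ∀ t, ∫ ω, ‖x (t + 1) ω - xstar‖ ^ 2 ∂μ ≤
      ∫ ω, ‖x t ω - xstar‖ ^ 2 ∂μ - γ * (∫ ω, (f (x t ω) - f xstar) ∂μ) + γ ^ 2 * σ ^ 2 := by
    intro t
    have hIzx : IndepFun (fun ω => x t ω - xstar) (z (t+1)) μ :=
      (hIndep t).comp (measurable_id.sub measurable_const) measurable_id
    have hIzg : IndepFun (fun ω => g (x t ω)) (z (t+1)) μ :=
      (hIndep t).comp hgc.measurable measurable_id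
    have hz0 : ∫ ω, z (t+1) ω ∂μ = 0 := hmean (t+1) (by omega)
    have I5 : ∫ ω, (inner ℝ (x t ω - xstar) (z (t+1) ω) : ℝ) ∂μ = 0 :=
      pgd_inner_zero hIzx (hXm t) (hL2 (t+1)) hz0
    have I6 : ∫ ω, (inner ℝ (g (x t ω)) (z (t+1) ω) : ℝ) ∂μ = 0 :=
      pgd_inner_zero hIzg (hGm t) (hL2 (t+1)) hz0
    have hpt : ∀ ω, ‖x (t+1) ω - xstar‖ ^ 2
        = ‖x t ω - xstar‖ ^ 2 + (-(2*γ)) * (inner ℝ (x t ω - xstar) (g (x t ω)) : ℝ)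
          + γ^2 * ‖g (x t ω)‖^2 + γ^2 * ‖z (t+1) ω‖^2
          + (-(2*γ)) * (inner ℝ (x t ω - xstar) (z (t+1) ω) : ℝ)
          + (2*γ^2) * (inner ℝ (g (x t ω)) (z (t+1) ω) : ℝ) := by
      intro ω
      have e1 : x (t+1) ω - xstar = (x t ω - xstar) - γ • (g (x t ω) + z (t+1) ω) := by
        rw [hrec t ω, sub_right_comm]
      rw [e1, norm_sub_sq_real, real_inner_smul_right, inner_add_right, norm_smul,
          Real.norm_eq_abs, mul_pow, sq_abs, norm_add_sq_real]
      ring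
    have iA := hint_x t
    have iB : Integrable (fun ω => (-(2*γ)) * (inner ℝ (x t ω - xstar) (g (x t ω)) : ℝ)) μ :=
      (pgd_inner_int (hXm t) (hGm t)).const_mul (-(2*γ))
    have iC : Integrable (fun ω => ‖g (x t ω)‖^2) μ :=
      (memLp_two_iff_integrable_sq_norm (hGm t).1).1 (hGm t)
    have iC' : Integrable (fun ω => γ^2 * ‖g (x t ω)‖^2) μ := iC.const_mul (γ^2)
    have iD : Integrable (fun ω => ‖z (t+1) ω‖^2) μ :=
      (memLp_two_iff_integrable_sq_norm (hL2 (t+1)).1).1 (hL2 (t+1))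
    have iD' : Integrable (fun ω => γ^2 * ‖z (t+1) ω‖^2) μ := iD.const_mul (γ^2)
    have iE : Integrable (fun ω => (-(2*γ)) * (inner ℝ (x t ω - xstar) (z (t+1) ω) : ℝ)) μ :=
      (pgd_inner_int (hXm t) (hL2 (t+1))).const_mul (-(2*γ))
    have iF : Integrable (fun ω => (2*γ^2) * (inner ℝ (g (x t ω)) (z (t+1) ω) : ℝ)) μ :=
      (pgd_inner_int (hGm t) (hL2 (t+1))).const_mul (2*γ^2)
    have jB : Integrable (fun ω => ‖x t ω - xstar‖^2
        + (-(2*γ)) * (inner ℝ (x t ω - xstar) (g (x t ω)) : ℝ)) μ := iA.add iB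
    have jC : Integrable (fun ω => ‖x t ω - xstar‖^2
        + (-(2*γ)) * (inner ℝ (x t ω - xstar) (g (x t ω)) : ℝ) + γ^2 * ‖g (x t ω)‖^2) μ :=
      jB.add iC'
    have jD : Integrable (fun ω => ‖x t ω - xstar‖^2
        + (-(2*γ)) * (inner ℝ (x t ω - xstar) (g (x t ω)) : ℝ) + γ^2 * ‖g (x t ω)‖^2
        + γ^2 * ‖z (t+1) ω‖^2) μ := jC.add iD'
    have jE : Integrable (fun ω => ‖x t ω - xstar‖^2
        + (-(2*γ)) * (inner ℝ (x t ω - xstar) (g (x t ω)) : ℝ) + γ^2 * ‖g (x t ω)‖^2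
        + γ^2 * ‖z (t+1) ω‖^2
        + (-(2*γ)) * (inner ℝ (x t ω - xstar) (z (t+1) ω) : ℝ)) μ := jD.add iE
    have hE : ∫ ω, ‖x (t+1) ω - xstar‖^2 ∂μ
        = ∫ ω, ‖x t ω - xstar‖^2 ∂μ
          + (-(2*γ)) * ∫ ω, (inner ℝ (x t ω - xstar) (g (x t ω)) : ℝ) ∂μ
          + γ^2 * ∫ ω, ‖g (x t ω)‖^2 ∂μ + γ^2 * ∫ ω, ‖z (t+1) ω‖^2 ∂μ
          + (-(2*γ)) * ∫ ω, (inner ℝ (x t ω - xstar) (z (t+1) ω) : ℝ) ∂μ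
          + (2*γ^2) * ∫ ω, (inner ℝ (g (x t ω)) (z (t+1) ω) : ℝ) ∂μ := by
      rw [integral_congr_ae (Filter.Eventually.of_forall hpt)]
      rw [integral_add jE iF, integral_add jD iE, integral_add jC iD',
          integral_add jB iC', integral_add iA iB,
          integral_const_mul, integral_const_mul, integral_const_mul, integral_const_mul,
          integral_const_mul]
    have hconv : ∫ ω, (f (x t ω) - f xstar) ∂μ
        ≤ ∫ ω, (inner ℝ (x t ω - xstar) (g (x t ω)) : ℝ) ∂μ := by
      apply integral_mono (hintf t) (pgd_inner_int (hXm t) (hGm t))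
      intro ω
      show f (x t ω) - f xstar ≤ (inner ℝ (x t ω - xstar) (g (x t ω)) : ℝ)
      have h := hconvex (x t ω) xstar
      have h2 : (inner ℝ (g (x t ω)) (xstar - x t ω) : ℝ)
          = -(inner ℝ (x t ω - xstar) (g (x t ω)) : ℝ) := by
        rw [real_inner_comm]
        rw [show xstar - x t ω = -(x t ω - xstar) by abel, inner_neg_left]
      rw [h2] at h
      linarith
    have hI3 : ∫ ω, ‖g (x t ω)‖^2 ∂μ ≤ 2*L * ∫ ω, (f (x t ω) - f xstar) ∂μ := by
      have e : ∫ ω, 2*L * (f (x t ω) - f xstar) ∂μ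
          = 2*L * ∫ ω, (f (x t ω) - f xstar) ∂μ := integral_const_mul _ _
      rw [← e]
      exact integral_mono iC ((hintf t).const_mul _) (fun ω => hgs (x t ω))
    have hI4 := hvar (t+1) (by omega)
    have hEnn : 0 ≤ ∫ ω, (f (x t ω) - f xstar) ∂μ := integral_nonneg (fun ω => hfnn t ω)
    have h2Lγ : 2*L*γ < 1 := by
      have := (lt_div_iff₀ (by positivity : (0:ℝ) < 2*L)).mp hγL
      linarith
    rw [hE, I5, I6]
    nlinarith [mul_le_mul_of_nonneg_left hconv (by positivity : (0:ℝ) ≤ 2*γ),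
      mul_le_mul_of_nonneg_left hI3 (by positivity : (0:ℝ) ≤ γ^2),
      mul_le_mul_of_nonneg_left hI4 (by positivity : (0:ℝ) ≤ γ^2),
      mul_nonneg (mul_nonneg hγ.le (by linarith : (0:ℝ) ≤ 1 - 2*L*γ)) hEnn]
  refine ⟨step, ?_⟩
  have hD0 : ∫ ω, ‖x 0 ω - xstar‖^2 ∂μ = ‖x0 - xstar‖^2 := by
    simp only [hx0]
    rw [integral_const]
    simp [measure_univ]
  have hsum : γ * (∑ t ∈ Finset.range (T+1), ∫ ω, (f (x t ω) - f xstar) ∂μ)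
      ≤ ‖x0 - xstar‖^2 + ((T:ℝ)+1) * (γ^2 * σ^2) := by
    have h1 : ∀ t, γ * (∫ ω, (f (x t ω) - f xstar) ∂μ)
        ≤ ((∫ ω, ‖x t ω - xstar‖^2 ∂μ) - (∫ ω, ‖x (t+1) ω - xstar‖^2 ∂μ)) + γ^2*σ^2 :=
      fun t => by linarith [step t]
    calc γ * (∑ t ∈ Finset.range (T+1), ∫ ω, (f (x t ω) - f xstar) ∂μ)
        = ∑ t ∈ Finset.range (T+1), γ * ∫ ω, (f (x t ω) - f xstar) ∂μ := by
          rw [Finset.mul_sum]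
      _ ≤ ∑ t ∈ Finset.range (T+1),
            (((∫ ω, ‖x t ω - xstar‖^2 ∂μ) - (∫ ω, ‖x (t+1) ω - xstar‖^2 ∂μ)) + γ^2*σ^2) :=
          Finset.sum_le_sum (fun t _ => h1 t)
      _ = ((∫ ω, ‖x 0 ω - xstar‖^2 ∂μ) - (∫ ω, ‖x (T+1) ω - xstar‖^2 ∂μ))
            + ((T:ℝ)+1) * (γ^2*σ^2) := by
          rw [Finset.sum_add_distrib, Finset.sum_range_sub' (fun t => ∫ ω, ‖x t ω - xstar‖^2 ∂μ),
            Finset.sum_const, Finset.card_range, nsmul_eq_mul]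
          push_cast
          ring
      _ ≤ ‖x0 - xstar‖^2 + ((T:ℝ)+1) * (γ^2*σ^2) := by
          have h2 : (0:ℝ) ≤ ∫ ω, ‖x (T+1) ω - xstar‖^2 ∂μ :=
            integral_nonneg (fun ω => sq_nonneg ‖x (T+1) ω - xstar‖)
          rw [hD0]
          linarith
  have hT1 : (0:ℝ) < (T:ℝ)+1 := by positivity
  have hγT : (0:ℝ) < γ * ((T:ℝ)+1) := by positivity
  have key2 : (1/((T:ℝ)+1)) * (∑ t ∈ Finset.range (T+1), ∫ ω, (f (x t ω) - f xstar) ∂μ)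
      = (γ * (∑ t ∈ Finset.range (T+1), ∫ ω, (f (x t ω) - f xstar) ∂μ)) / (γ * ((T:ℝ)+1)) := by
    field_simp
  rw [key2]
  calc (γ * (∑ t ∈ Finset.range (T+1), ∫ ω, (f (x t ω) - f xstar) ∂μ)) / (γ * ((T:ℝ)+1))
      ≤ (‖x0 - xstar‖^2 + ((T:ℝ)+1) * (γ^2 * σ^2)) / (γ * ((T:ℝ)+1)) :=
        div_le_div_of_nonneg_right hsum hγT.le
    _ = ‖x0 - xstar‖^2 / (γ * ((T:ℝ)+1)) + γ * σ^2 := by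
        field_simp
end

section
/- Let f : R^d → R be differentiable, convex, L-smooth with minimizer x*, and consider Anti-PGD iterates x_{t+1} = x_t − γ(∇f(x_t) + z_{t+1} − z_t), z_0 = 0, where z_t are independent mean-zero random vectors with E‖z_t‖² ≤ σ². If 0 < γ < 1/(4L), then with the virtual sequence x̃_{t+1} = x̃_t − γ∇f(x_t), x̃_0 = x_0, one has E‖x̃_{t+1} − x*‖² ≤ E‖x̃_t − x*‖² − (γ/2)E[f(x_t) − f*] + 2Lγ³σ², and consequently (1/(T+1)) Σ_{t=0}^T E[f(x_t) − f*] ≤ 2‖x_0 − x*‖²/(γ(T+1)) + 4Lγ²σ². -/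
open MeasureTheory ProbabilityTheory Finset

set_option maxHeartbeats 1000000

private lemma anti_pgd_aux_arith (γ L D u1 u2 v N A S : ℝ)
    (h1 : γ * D ≤ γ * u1) (h2 : γ ^ 2 * -(L * γ * N) ≤ γ ^ 2 * u2)
    (h3 : γ ^ 2 * S ≤ γ ^ 2 * (4 * L * D))
    (h4 : 4 * L * γ * (γ * D) ≤ 1 * (γ * D)) (h5 : 0 ≤ γ * D) :
    A - 2 * (γ * (u1 + γ * (u2 + v))) + γ ^ 2 * S
      ≤ A - γ / 2 * D - 2 * γ ^ 2 * v + 2 * L * γ ^ 3 * N := by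
  linarith

/-- Anti-PGD convergence rate: for `f` convex, `L`-smooth with minimizer `x*`,
Anti-PGD iterates `x_{t+1} = x_t − γ(∇f(x_t) + z_{t+1} − z_t)` (`z_0 = 0`) with
independent mean-zero noise of second moment `≤ σ²` and `0 < γ < 1/(4L)` satisfy,
with the virtual sequence `x̃_{t+1} = x̃_t − γ∇f(x_t)`, `x̃_0 = x_0`:
`E‖x̃_{t+1} − x*‖² ≤ E‖x̃_t − x*‖² − (γ/2)E[f(x_t) − f*] + 2Lγ³σ²` and consequently
`(1/(T+1)) ∑_{t=0}^T E[f(x_t) − f*] ≤ 2‖x_0 − x*‖²/(γ(T+1)) + 4Lγ²σ²`. -/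
theorem anti_pgd_convergence
    {Ω : Type*} [MeasurableSpace Ω] (μ : Measure Ω) [IsProbabilityMeasure μ]
    (d : ℕ) (f : EuclideanSpace ℝ (Fin d) → ℝ)
    (g : EuclideanSpace ℝ (Fin d) → EuclideanSpace ℝ (Fin d))
    (hgrad : ∀ y, HasGradientAt f (g y) y)
    (hconvex : ∀ y w, f y + (inner ℝ (g y) (w - y) : ℝ) ≤ f w)
    (L : ℝ) (hL : 0 < L)
    (hsmooth : ∀ y w, ‖g y - g w‖ ≤ L * ‖y - w‖)
    (xstar : EuclideanSpace ℝ (Fin d)) (hmin : ∀ y, f xstar ≤ f y)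
    (γ σ : ℝ) (hγ : 0 < γ) (hγL : γ < 1 / (4 * L)) (hσ : 0 ≤ σ)
    (z : ℕ → Ω → EuclideanSpace ℝ (Fin d))
    (hz0 : ∀ ω, z 0 ω = 0)
    (hmeas : ∀ t, Measurable (z t))
    (hindep : iIndepFun z μ)
    (hL2 : ∀ t, MemLp (z t) 2 μ)
    (hmean : ∀ t, 1 ≤ t → ∫ ω, z t ω ∂μ = 0)
    (hvar : ∀ t, 1 ≤ t → ∫ ω, ‖z t ω‖ ^ 2 ∂μ ≤ σ ^ 2)
    (x0 : EuclideanSpace ℝ (Fin d))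
    (x xt : ℕ → Ω → EuclideanSpace ℝ (Fin d))
    (hx0 : ∀ ω, x 0 ω = x0)
    (hrec : ∀ t ω, x (t + 1) ω = x t ω - γ • (g (x t ω) + z (t + 1) ω - z t ω))
    (hxt0 : ∀ ω, xt 0 ω = x 0 ω)
    (hvirt : ∀ t ω, xt (t + 1) ω = xt t ω - γ • g (x t ω))
    (hint_f : ∀ t, Integrable (fun ω => f (x t ω)) μ)
    (hint_x : ∀ t, Integrable (fun ω => ‖xt t ω - xstar‖ ^ 2) μ)
    (T : ℕ) :
    (∀ t, ∫ ω, ‖xt (t + 1) ω - xstar‖ ^ 2 ∂μ ≤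
        ∫ ω, ‖xt t ω - xstar‖ ^ 2 ∂μ
          - (γ / 2) * (∫ ω, (f (x t ω) - f xstar) ∂μ) + 2 * L * γ ^ 3 * σ ^ 2) ∧
      (1 / ((T : ℝ) + 1)) * ∑ t ∈ Finset.range (T + 1), ∫ ω, (f (x t ω) - f xstar) ∂μ ≤
        2 * ‖x0 - xstar‖ ^ 2 / (γ * ((T : ℝ) + 1)) + 4 * L * γ ^ 2 * σ ^ 2 := by
  classical
  have hL4 : (0:ℝ) < 4 * L := by linarith
  have hγ4 : 4 * L * γ ≤ 1 := by
    have h := (lt_div_iff₀ hL4).mp hγL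
    nlinarith
  -- continuity and measurability of the gradient map
  have hglip : LipschitzWith (Real.toNNReal L) g :=
    LipschitzWith.of_dist_le_mul fun y w => by
      simpa [dist_eq_norm, Real.coe_toNNReal L hL.le] using hsmooth y w
  have hgmeas : Measurable g := hglip.continuous.measurable
  -- quadratic upper bound (descent lemma, with lossy constant L)
  have hquad : ∀ y w, f w ≤ f y + (inner ℝ (g y) (w - y) : ℝ) + L * ‖w - y‖ ^ 2 := by
    intro y w
    have hseg : Convex ℝ (segment ℝ y w) := convex_segment y w
    have hder : ∀ u ∈ segment ℝ y w,
        HasFDerivWithinAt f (InnerProductSpace.toDual ℝ _ (g u)) (segment ℝ y w) u :=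
      fun u _ => ((hgrad u).hasFDerivAt).hasFDerivWithinAt
    have hbound : ∀ u ∈ segment ℝ y w,
        ‖InnerProductSpace.toDual ℝ _ (g u) - InnerProductSpace.toDual ℝ _ (g y)‖
          ≤ L * ‖w - y‖ := by
      intro u hu
      rw [← map_sub, LinearIsometryEquiv.norm_map]
      refine (hsmooth u y).trans ?_
      have h1 : ‖u - y‖ ≤ ‖w - y‖ := by
        obtain ⟨a, b, ha, hb, hab, rfl⟩ := hu
        have e : a • y + b • w - y = b • (w - y) := by
          have : a = 1 - b := by linarith
          rw [this]; module
        rw [e, norm_smul, Real.norm_eq_abs, abs_of_nonneg hb]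
        nlinarith [norm_nonneg (w - y)]
      nlinarith [norm_nonneg (u - y), norm_nonneg (w - y)]
    have h := hseg.norm_image_sub_le_of_norm_hasFDerivWithin_le' hder hbound
      (left_mem_segment ℝ y w) (right_mem_segment ℝ y w)
    rw [InnerProductSpace.toDual_apply_apply] at h
    have h2 := (le_abs_self (f w - f y - (inner ℝ (g y) (w - y) : ℝ))).trans
      ((Real.norm_eq_abs _ ▸ h :
        |f w - f y - (inner ℝ (g y) (w - y) : ℝ)| ≤ L * ‖w - y‖ * ‖w - y‖))
    nlinarith [norm_nonneg (w - y)]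
  -- gradient norm bound
  have hgradsq : ∀ y, ‖g y‖ ^ 2 ≤ 4 * L * (f y - f xstar) := by
    intro y
    set c : ℝ := 1 / (2 * L) with hc
    have hcpos : 0 < c := by positivity
    have h := hquad y (y - c • g y)
    have h0 := hmin (y - c • g y)
    have e1 : y - c • g y - y = -(c • g y) := by module
    rw [e1] at h
    have e2 : (inner ℝ (g y) (-(c • g y)) : ℝ) = -(c * ‖g y‖ ^ 2) := by
      rw [inner_neg_right, real_inner_smul_right, real_inner_self_eq_norm_sq]
    have e3 : ‖-(c • g y)‖ ^ 2 = c ^ 2 * ‖g y‖ ^ 2 := by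
      rw [norm_neg, norm_smul, Real.norm_eq_abs, mul_pow, sq_abs]
    rw [e2, e3] at h
    have hLc : L * c ^ 2 = c / 2 := by
      rw [hc]; field_simp
    have hkey : c / 2 * ‖g y‖ ^ 2 ≤ f y - f xstar := by nlinarith
    have h4 : 4 * L * (c / 2) = 1 := by
      rw [hc]; field_simp; ring
    have h5 : 4 * L * (c / 2 * ‖g y‖ ^ 2) ≤ 4 * L * (f y - f xstar) := by
      have := mul_le_mul_of_nonneg_left hkey hL4.le
      linarith
    calc ‖g y‖ ^ 2 = 4 * L * (c / 2) * ‖g y‖ ^ 2 := by rw [h4, one_mul]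
      _ = 4 * L * (c / 2 * ‖g y‖ ^ 2) := by ring
      _ ≤ 4 * L * (f y - f xstar) := h5
  have hgzero : g xstar = 0 := by
    have h := hgradsq xstar
    simp only [sub_self, mul_zero] at h
    have : ‖g xstar‖ = 0 := by nlinarith [norm_nonneg (g xstar)]
    exact norm_eq_zero.mp this
  have hgle : ∀ y, ‖g y‖ ≤ L * ‖y - xstar‖ := fun y => by
    simpa [hgzero] using hsmooth y xstar
  -- key relation between the two sequences
  have key : ∀ t ω, x t ω = xt t ω - γ • z t ω := by
    intro t
    induction t with
    | zero => intro ω; rw [hxt0, hz0]; simp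
    | succ t ih =>
      intro ω
      rw [hrec t ω, hvirt t ω, ih ω]
      module
  -- measurability of the iterates
  have hxtmeas : ∀ t, Measurable (xt t) := by
    intro t
    induction t with
    | zero =>
      have e : xt 0 = fun _ => x0 := funext fun ω => (hxt0 ω).trans (hx0 ω)
      rw [e]; exact measurable_const
    | succ t ih =>
      have hx : Measurable (x t) := by
        have e : x t = fun ω => xt t ω - γ • z t ω := funext (key t)
        rw [e]; exact ih.sub ((hmeas t).const_smul γ)
      have e : xt (t + 1) = fun ω => xt t ω - γ • g (x t ω) := funext (hvirt t)
      rw [e]; exact ih.sub ((hgmeas.comp hx).const_smul γ)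
  have hxmeas : ∀ t, Measurable (x t) := by
    intro t
    have e : x t = fun ω => xt t ω - γ • z t ω := funext (key t)
    rw [e]; exact (hxtmeas t).sub ((hmeas t).const_smul γ)
  -- xt t is a measurable function of z 0, ..., z (t-1)
  have hrepr : ∀ t, ∃ Φ : (Fin t → EuclideanSpace ℝ (Fin d)) → EuclideanSpace ℝ (Fin d),
      Measurable Φ ∧ ∀ ω, xt t ω = Φ (fun i => z i ω) := by
    intro t
    induction t with
    | zero => exact ⟨fun _ => x0, measurable_const, fun ω => (hxt0 ω).trans (hx0 ω)⟩
    | succ t ih =>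
      obtain ⟨Φ, hΦm, hΦ⟩ := ih
      refine ⟨fun v => Φ (fun i => v i.castSucc)
        - γ • g (Φ (fun i => v i.castSucc) - γ • v (Fin.last t)), ?_, ?_⟩
      · have hres : Measurable fun (v : Fin (t+1) → EuclideanSpace ℝ (Fin d)) =>
            Φ (fun i => v i.castSucc) :=
          hΦm.comp (measurable_pi_lambda _ fun i => measurable_pi_apply _)
        exact hres.sub
          ((hgmeas.comp (hres.sub ((measurable_pi_apply _).const_smul γ))).const_smul γ)
      · intro ω
        simp only [Fin.coe_castSucc, Fin.val_last]
        rw [hvirt t ω, hΦ ω, key t ω, hΦ ω]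
  -- independence of xt t and z t
  have hindepF : ∀ t, IndepFun (xt t) (z t) μ := by
    intro t
    obtain ⟨Φ, hΦm, hΦ⟩ := hrepr t
    have hdisj : Disjoint (Finset.range t) ({t} : Finset ℕ) := by simp
    have h1 := hindep.indepFun_finset (Finset.range t) {t} hdisj hmeas
    have hF1 : Measurable fun (v : (i : (Finset.range t : Finset ℕ)) →
        EuclideanSpace ℝ (Fin d)) =>
        Φ (fun i : Fin t => v ⟨(i : ℕ), Finset.mem_range.mpr i.isLt⟩) :=
      hΦm.comp (measurable_pi_lambda _ fun i => measurable_pi_apply _)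
    have hF2 : Measurable fun (v : (i : ({t} : Finset ℕ)) → EuclideanSpace ℝ (Fin d)) =>
        v ⟨t, Finset.mem_singleton_self t⟩ := measurable_pi_apply _
    have h2 := h1.comp hF1 hF2
    have e1 : ((fun (v : (i : (Finset.range t : Finset ℕ)) → EuclideanSpace ℝ (Fin d)) =>
        Φ (fun i : Fin t => v ⟨(i : ℕ), Finset.mem_range.mpr i.isLt⟩)) ∘ (fun a j => z j a))
        = xt t := funext fun a => (hΦ a).symm
    have e2 : ((fun (v : (i : ({t} : Finset ℕ)) → EuclideanSpace ℝ (Fin d)) =>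
        v ⟨t, Finset.mem_singleton_self t⟩) ∘ (fun a j => z j a)) = z t := rfl
    rw [e1, e2] at h2
    exact h2
  -- integrability facts
  have hxtn2 : ∀ t, MemLp (fun ω => ‖xt t ω - xstar‖) 2 μ := fun t =>
    (memLp_two_iff_integrable_sq
      (((hxtmeas t).sub measurable_const).norm.aestronglyMeasurable)).mpr (hint_x t)
  have hzn2 : ∀ t, MemLp (fun ω => ‖z t ω‖) 2 μ := fun t => (hL2 t).norm
  have hz_int : ∀ t, Integrable (z t) μ := fun t => (hL2 t).integrable one_le_two
  have hzsq_int : ∀ t, Integrable (fun ω => ‖z t ω‖ ^ 2) μ := fun t => (hzn2 t).integrable_sq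
  have hmul : ∀ (u v : Ω → ℝ), MemLp u 2 μ → MemLp v 2 μ →
      Integrable (fun ω => u ω * v ω) μ := by
    intro u v hu hv
    have h := hv.smul (φ := u) hu (p := 2) (q := 2) (r := 1)
    rw [memLp_one_iff_integrable] at h
    exact h
  have hdom : ∀ t, Integrable (fun ω => L * ‖xt t ω - xstar‖ * ‖z t ω‖) μ := by
    intro t
    have := hmul _ _ ((hxtn2 t).const_mul L) (hzn2 t)
    simpa [mul_assoc] using this
  have hcomp : ∀ (w : EuclideanSpace ℝ (Fin d)) (i : Fin d), |w i| ≤ ‖w‖ := by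
    intro w i
    have h1 : |w i| ^ 2 ≤ ∑ j : Fin d, ‖w j‖ ^ 2 := by
      have := Finset.single_le_sum (f := fun j : Fin d => ‖w j‖ ^ 2)
        (fun j _ => sq_nonneg _) (Finset.mem_univ i)
      simpa [Real.norm_eq_abs, sq_abs] using this
    have h2 : ‖w‖ = Real.sqrt (∑ j : Fin d, ‖w j‖ ^ 2) := EuclideanSpace.norm_eq w
    calc |w i| = Real.sqrt (|w i| ^ 2) := by rw [Real.sqrt_sq (abs_nonneg _)]
      _ ≤ Real.sqrt (∑ j : Fin d, ‖w j‖ ^ 2) := Real.sqrt_le_sqrt h1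
      _ = ‖w‖ := h2.symm
  have hGtbound : ∀ t ω, ‖g (xt t ω)‖ ≤ L * ‖xt t ω - xstar‖ := fun t ω => hgle _
  have hinner_int : ∀ t, Integrable (fun ω => (inner ℝ (g (xt t ω)) (z t ω) : ℝ)) μ := by
    intro t
    refine (hdom t).mono' ?_ ?_
    · exact ((hgmeas.comp (hxtmeas t)).inner (hmeas t)).aestronglyMeasurable
    · filter_upwards with ω
      rw [Real.norm_eq_abs]
      calc |(inner ℝ (g (xt t ω)) (z t ω) : ℝ)| ≤ ‖g (xt t ω)‖ * ‖z t ω‖ :=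
          abs_real_inner_le_norm _ _
        _ ≤ L * ‖xt t ω - xstar‖ * ‖z t ω‖ :=
          mul_le_mul_of_nonneg_right (hGtbound t ω) (norm_nonneg _)
  have hprod_int : ∀ t (i : Fin d),
      Integrable (fun ω => g (xt t ω) i * z t ω i) μ := by
    intro t i
    refine (hdom t).mono' ?_ ?_
    · exact ((((measurable_pi_apply i).comp (WithLp.measurable_ofLp 2 _)).comp (hgmeas.comp (hxtmeas t))).mul
        (((measurable_pi_apply i).comp (WithLp.measurable_ofLp 2 _)).comp (hmeas t))).aestronglyMeasurable
    · filter_upwards with ω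
      rw [Real.norm_eq_abs, abs_mul]
      calc |g (xt t ω) i| * |z t ω i| ≤ ‖g (xt t ω)‖ * ‖z t ω‖ :=
          mul_le_mul (hcomp _ i) (hcomp _ i) (abs_nonneg _) (norm_nonneg _)
        _ ≤ L * ‖xt t ω - xstar‖ * ‖z t ω‖ :=
          mul_le_mul_of_nonneg_right (hGtbound t ω) (norm_nonneg _)
  -- the inner product term has zero mean for t ≥ 1
  have hIzero : ∀ t, 1 ≤ t → ∫ ω, (inner ℝ (g (xt t ω)) (z t ω) : ℝ) ∂μ = 0 := by
    intro t ht
    have hptw : ∀ ω, (inner ℝ (g (xt t ω)) (z t ω) : ℝ)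
        = ∑ i : Fin d, g (xt t ω) i * z t ω i := fun ω => by
      simp [PiLp.inner_apply, RCLike.inner_apply, conj_trivial]
      exact Finset.sum_congr rfl fun _ _ => mul_comm _ _
    simp_rw [hptw]
    rw [integral_finset_sum _ (fun i _ => hprod_int t i)]
    refine Finset.sum_eq_zero fun i _ => ?_
    have hind_i : IndepFun (fun ω => g (xt t ω) i) (fun ω => z t ω i) μ :=
      (hindepF t).comp (((measurable_pi_apply i).comp (WithLp.measurable_ofLp 2 _)).comp hgmeas) ((measurable_pi_apply i).comp (WithLp.measurable_ofLp 2 _))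
    have h := hind_i.integral_mul_eq_mul_integral
      ((((measurable_pi_apply i).comp (WithLp.measurable_ofLp 2 _)).comp (hgmeas.comp (hxtmeas t))).aestronglyMeasurable)
      ((((measurable_pi_apply i).comp (WithLp.measurable_ofLp 2 _)).comp (hmeas t)).aestronglyMeasurable)
    have hY0 : ∫ ω, z t ω i ∂μ = 0 := by
      have h2 := (EuclideanSpace.proj (𝕜 := ℝ) i).integral_comp_comm (hz_int t)
      have e : ∀ w : EuclideanSpace ℝ (Fin d), EuclideanSpace.proj (𝕜 := ℝ) i w = w i :=
        fun w => rfl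
      simp only [e] at h2
      rw [h2, hmean t ht]
      rfl
    calc ∫ ω, g (xt t ω) i * z t ω i ∂μ
        = (∫ ω, g (xt t ω) i ∂μ) * ∫ ω, z t ω i ∂μ := h
      _ = 0 := by rw [hY0, mul_zero]
  -- pointwise descent inequality
  have hpt : ∀ t ω, ‖xt (t + 1) ω - xstar‖ ^ 2 ≤
      ‖xt t ω - xstar‖ ^ 2 - γ / 2 * (f (x t ω) - f xstar)
        - 2 * γ ^ 2 * (inner ℝ (g (xt t ω)) (z t ω) : ℝ)
        + 2 * L * γ ^ 3 * ‖z t ω‖ ^ 2 := by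
    intro t ω
    set a := xt t ω - xstar with ha
    set G := g (x t ω) with hG
    set Gt := g (xt t ω) with hGt
    set Z := z t ω with hZ
    have f1 : xt (t + 1) ω - xstar = a - γ • G := by
      rw [hvirt t ω, ha, hG]; module
    have hasum : a = (x t ω - xstar) + γ • Z := by
      rw [ha, key t ω, hZ]; module
    have hsplit : (inner ℝ G Z : ℝ) = (inner ℝ (G - Gt) Z : ℝ) + (inner ℝ Gt Z : ℝ) := by
      rw [inner_sub_left]; ring
    have hGa : (inner ℝ a (γ • G) : ℝ)
        = γ * ((inner ℝ G (x t ω - xstar) : ℝ)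
          + γ * ((inner ℝ (G - Gt) Z : ℝ) + (inner ℝ Gt Z : ℝ))) := by
      rw [real_inner_smul_right, real_inner_comm]
      rw [show (inner ℝ G a : ℝ) = (inner ℝ G ((x t ω - xstar) + γ • Z) : ℝ) by rw [← hasum]]
      rw [inner_add_right, real_inner_smul_right, hsplit]
    have hnormsq : ‖γ • G‖ ^ 2 = γ ^ 2 * ‖G‖ ^ 2 := by
      rw [norm_smul, Real.norm_eq_abs, mul_pow, sq_abs]
    have e1 : ‖xt (t + 1) ω - xstar‖ ^ 2
        = ‖a‖ ^ 2 - 2 * (γ * ((inner ℝ G (x t ω - xstar) : ℝ)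
          + γ * ((inner ℝ (G - Gt) Z : ℝ) + (inner ℝ Gt Z : ℝ)))) + γ ^ 2 * ‖G‖ ^ 2 := by
      rw [f1, norm_sub_sq_real, hGa, hnormsq]
    -- convexity
    have hc : f (x t ω) - f xstar ≤ (inner ℝ G (x t ω - xstar) : ℝ) := by
      have h := hconvex (x t ω) xstar
      have e : xstar - x t ω = -(x t ω - xstar) := by module
      rw [e, inner_neg_right] at h
      linarith
    -- smoothness cross term
    have hcross : -(L * γ * ‖Z‖ ^ 2) ≤ (inner ℝ (G - Gt) Z : ℝ) := by
      have h1 : |(inner ℝ (G - Gt) Z : ℝ)| ≤ ‖G - Gt‖ * ‖Z‖ := abs_real_inner_le_norm _ _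
      have h2 : ‖G - Gt‖ ≤ L * ‖x t ω - xt t ω‖ := hsmooth _ _
      have h3 : ‖x t ω - xt t ω‖ = γ * ‖Z‖ := by
        have e : x t ω - xt t ω = -(γ • Z) := by rw [key t ω, hZ]; module
        rw [e, norm_neg, norm_smul, Real.norm_eq_abs, abs_of_pos hγ]
      have h4 : ‖G - Gt‖ * ‖Z‖ ≤ L * γ * ‖Z‖ ^ 2 := by
        rw [h3] at h2
        calc ‖G - Gt‖ * ‖Z‖ ≤ L * (γ * ‖Z‖) * ‖Z‖ :=
            mul_le_mul_of_nonneg_right h2 (norm_nonneg _)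
          _ = L * γ * ‖Z‖ ^ 2 := by ring
      have := (abs_le.mp (h1.trans h4)).1
      linarith
    have hDnn : 0 ≤ f (x t ω) - f xstar := by linarith [hmin (x t ω)]
    have hGsq : ‖G‖ ^ 2 ≤ 4 * L * (f (x t ω) - f xstar) := hgradsq _
    rw [e1]
    set D := f (x t ω) - f xstar
    set u1 := (inner ℝ G (x t ω - xstar) : ℝ)
    set u2 := (inner ℝ (G - Gt) Z : ℝ)
    set v := (inner ℝ Gt Z : ℝ)
    have h1 : γ * D ≤ γ * u1 := mul_le_mul_of_nonneg_left hc hγ.le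
    have h2 : γ ^ 2 * (-(L * γ * ‖Z‖ ^ 2)) ≤ γ ^ 2 * u2 :=
      mul_le_mul_of_nonneg_left hcross (sq_nonneg γ)
    have h3 : γ ^ 2 * ‖G‖ ^ 2 ≤ γ ^ 2 * (4 * L * D) :=
      mul_le_mul_of_nonneg_left hGsq (sq_nonneg γ)
    have h4 : 4 * L * γ * (γ * D) ≤ 1 * (γ * D) :=
      mul_le_mul_of_nonneg_right hγ4 (mul_nonneg hγ.le hDnn)
    have h5 : 0 ≤ γ * D := mul_nonneg hγ.le hDnn
    exact anti_pgd_aux_arith γ L D u1 u2 v (‖Z‖ ^ 2) (‖a‖ ^ 2) (‖G‖ ^ 2) h1 h2 h3 h4 h5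
  -- the per-step expectation bound
  have hfd : ∀ t, Integrable (fun ω => f (x t ω) - f xstar) μ :=
    fun t => (hint_f t).sub (integrable_const _)
  have hstep : ∀ t, ∫ ω, ‖xt (t + 1) ω - xstar‖ ^ 2 ∂μ ≤
      ∫ ω, ‖xt t ω - xstar‖ ^ 2 ∂μ
        - (γ / 2) * (∫ ω, (f (x t ω) - f xstar) ∂μ) + 2 * L * γ ^ 3 * σ ^ 2 := by
    intro t
    have iA := hint_x t
    have iB : Integrable (fun ω => γ / 2 * (f (x t ω) - f xstar)) μ := (hfd t).const_mul (γ / 2)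
    have iC : Integrable (fun ω => 2 * γ ^ 2 * (inner ℝ (g (xt t ω)) (z t ω) : ℝ)) μ :=
      (hinner_int t).const_mul (2 * γ ^ 2)
    have iE : Integrable (fun ω => 2 * L * γ ^ 3 * ‖z t ω‖ ^ 2) μ :=
      (hzsq_int t).const_mul (2 * L * γ ^ 3)
    have iAB : Integrable (fun ω =>
        ‖xt t ω - xstar‖ ^ 2 - γ / 2 * (f (x t ω) - f xstar)) μ := iA.sub iB
    have iABC : Integrable (fun ω =>
        ‖xt t ω - xstar‖ ^ 2 - γ / 2 * (f (x t ω) - f xstar)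
          - 2 * γ ^ 2 * (inner ℝ (g (xt t ω)) (z t ω) : ℝ)) μ := iAB.sub iC
    have hIr : Integrable (fun ω =>
        ‖xt t ω - xstar‖ ^ 2 - γ / 2 * (f (x t ω) - f xstar)
          - 2 * γ ^ 2 * (inner ℝ (g (xt t ω)) (z t ω) : ℝ)
          + 2 * L * γ ^ 3 * ‖z t ω‖ ^ 2) μ := iABC.add iE
    have hmono := integral_mono (hint_x (t + 1)) hIr (hpt t)
    have hsplit : ∫ ω, (‖xt t ω - xstar‖ ^ 2 - γ / 2 * (f (x t ω) - f xstar)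
          - 2 * γ ^ 2 * (inner ℝ (g (xt t ω)) (z t ω) : ℝ)
          + 2 * L * γ ^ 3 * ‖z t ω‖ ^ 2) ∂μ
        = ∫ ω, ‖xt t ω - xstar‖ ^ 2 ∂μ
          - γ / 2 * ∫ ω, (f (x t ω) - f xstar) ∂μ
          - 2 * γ ^ 2 * ∫ ω, (inner ℝ (g (xt t ω)) (z t ω) : ℝ) ∂μ
          + 2 * L * γ ^ 3 * ∫ ω, ‖z t ω‖ ^ 2 ∂μ := by
      rw [integral_add iABC iE, integral_sub iAB iC, integral_sub iA iB,
        integral_const_mul, integral_const_mul, integral_const_mul]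
    have hI0 : ∫ ω, (inner ℝ (g (xt t ω)) (z t ω) : ℝ) ∂μ = 0 := by
      rcases Nat.eq_zero_or_pos t with rfl | ht
      · have e : ∀ ω, (inner ℝ (g (xt 0 ω)) (z 0 ω) : ℝ) = 0 := fun ω => by
          rw [hz0]; simp
        simp_rw [e]; simp
      · exact hIzero t ht
    have hN : ∫ ω, ‖z t ω‖ ^ 2 ∂μ ≤ σ ^ 2 := by
      rcases Nat.eq_zero_or_pos t with rfl | ht
      · have e : ∀ ω, ‖z 0 ω‖ ^ 2 = 0 := fun ω => by rw [hz0]; simp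
        simp_rw [e]; simp; positivity
      · exact hvar t ht
    rw [hsplit, hI0] at hmono
    have hcoef : (0:ℝ) ≤ 2 * L * γ ^ 3 := by positivity
    have := mul_le_mul_of_nonneg_left hN hcoef
    linarith
  refine ⟨hstep, ?_⟩
  -- telescoping
  set S : ℕ → ℝ := fun t => ∫ ω, ‖xt t ω - xstar‖ ^ 2 ∂μ with hS
  set F : ℕ → ℝ := fun t => ∫ ω, (f (x t ω) - f xstar) ∂μ with hF
  have hSnn : ∀ t, 0 ≤ S t := fun t => integral_nonneg fun ω => by positivity
  have hS0 : S 0 = ‖x0 - xstar‖ ^ 2 := by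
    have e : (fun ω => ‖xt 0 ω - xstar‖ ^ 2) = fun _ => ‖x0 - xstar‖ ^ 2 :=
      funext fun ω => by rw [hxt0, hx0]
    rw [hS]; simp only [e]; rw [integral_const]; simp
  have htel : ∀ n : ℕ, γ / 2 * ∑ t ∈ Finset.range n, F t
      ≤ S 0 - S n + n * (2 * L * γ ^ 3 * σ ^ 2) := by
    intro n
    induction n with
    | zero => simp
    | succ n ih =>
      rw [Finset.sum_range_succ, mul_add]
      have h := hstep n
      push_cast
      have : S (n + 1) ≤ S n - γ / 2 * F n + 2 * L * γ ^ 3 * σ ^ 2 := h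
      linarith
  have hP : (0:ℝ) < (T : ℝ) + 1 := by positivity
  have hSig : γ / 2 * ∑ t ∈ Finset.range (T + 1), F t
      ≤ S 0 + ((T : ℝ) + 1) * (2 * L * γ ^ 3 * σ ^ 2) := by
    have h := htel (T + 1)
    have := hSnn (T + 1)
    push_cast at h
    linarith
  have key2 : ∑ t ∈ Finset.range (T + 1), F t
      ≤ 2 / γ * S 0 + ((T : ℝ) + 1) * (4 * L * γ ^ 2 * σ ^ 2) := by
    have h := mul_le_mul_of_nonneg_left hSig (by positivity : (0:ℝ) ≤ 2 / γ)
    have e1 : 2 / γ * (γ / 2 * ∑ t ∈ Finset.range (T + 1), F t)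
        = ∑ t ∈ Finset.range (T + 1), F t := by
      field_simp
    have e2 : 2 / γ * (S 0 + ((T : ℝ) + 1) * (2 * L * γ ^ 3 * σ ^ 2))
        = 2 / γ * S 0 + ((T : ℝ) + 1) * (2 / γ * (2 * L * γ ^ 3 * σ ^ 2)) := by ring
    have e3 : 2 / γ * (2 * L * γ ^ 3 * σ ^ 2) = 4 * L * γ ^ 2 * σ ^ 2 := by
      field_simp; ring
    rw [e1, e2, e3] at h
    exact h
  calc (1 / ((T : ℝ) + 1)) * ∑ t ∈ Finset.range (T + 1), F t
      ≤ (1 / ((T : ℝ) + 1)) * (2 / γ * S 0 + ((T : ℝ) + 1) * (4 * L * γ ^ 2 * σ ^ 2)) := by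
        exact mul_le_mul_of_nonneg_left key2 (by positivity)
    _ = 2 * S 0 / (γ * ((T : ℝ) + 1)) + 4 * L * γ ^ 2 * σ ^ 2 := by
        field_simp [hγ.ne', hP.ne']
    _ = 2 * ‖x0 - xstar‖ ^ 2 / (γ * ((T : ℝ) + 1)) + 4 * L * γ ^ 2 * σ ^ 2 := by
        rw [hS0]
end

section
/- Consider PGD on f(x) = (L/2)x² (scalar) with iterates x_{t+1} = (1 − γL)x_t − γ z_{t+1} and the virtual sequence x̃_{t+1} = x̃_t − γL x_t, x̃_0 = x_0. Then x̃_{T} satisfies E[x̃_T²] = (1 − γL)^{2T} x_0² + γ² Σ_{j=1}^{T−1} [1 − (1 − γL)^j]² σ², and if T ≥ 2(log 4)/(γL) then E[x̃_T²] ≥ γ²σ²T/4. -/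
open MeasureTheory ProbabilityTheory Finset

/-- The standard virtual-sequence analysis is loose for PGD: for scalar PGD iterates
`x_{t+1} = (1 − γL)x_t − γ z_{t+1}` and virtual sequence `x̃_{t+1} = x̃_t − γL x_t`,
`x̃_0 = x_0`, one has `E[x̃_T²] = (1 − γL)^{2T} x_0² + γ² ∑_{j=1}^{T−1} (1 − (1 − γL)^j)² σ²`,
and if `T ≥ 2 log 4/(γL)` then `E[x̃_T²] ≥ γ²σ²T/4`. -/
theorem pgd_virtual_sequence_loose
    {Ω : Type*} [MeasurableSpace Ω] (μ : Measure Ω) [IsProbabilityMeasure μ]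
    (γ L σ : ℝ) (hγ : 0 < γ) (hL : 0 < L) (h1 : γ * L < 1) (hσ : 0 ≤ σ)
    (z : ℕ → Ω → ℝ)
    (hmeas : ∀ t, Measurable (z t))
    (hindep : iIndepFun z μ)
    (hL2 : ∀ t, MemLp (z t) 2 μ)
    (hmean : ∀ t, 1 ≤ t → ∫ ω, z t ω ∂μ = 0)
    (hvar : ∀ t, 1 ≤ t → ∫ ω, (z t ω) ^ 2 ∂μ = σ ^ 2)
    (x0 : ℝ) (x xt : ℕ → Ω → ℝ)
    (hx0 : ∀ ω, x 0 ω = x0)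
    (hrec : ∀ t ω, x (t + 1) ω = (1 - γ * L) * x t ω - γ * z (t + 1) ω)
    (hxt0 : ∀ ω, xt 0 ω = x0)
    (hvirt : ∀ t ω, xt (t + 1) ω = xt t ω - γ * L * x t ω)
    (T : ℕ) :
    ∫ ω, (xt T ω) ^ 2 ∂μ =
        (1 - γ * L) ^ (2 * T) * x0 ^ 2
          + γ ^ 2 * ∑ j ∈ Finset.Icc 1 (T - 1), (1 - (1 - γ * L) ^ j) ^ 2 * σ ^ 2 ∧
      ((T : ℝ) ≥ 2 * Real.log 4 / (γ * L) →
        γ ^ 2 * σ ^ 2 * T / 4 ≤ ∫ ω, (xt T ω) ^ 2 ∂μ) := by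
  set r : ℝ := 1 - γ * L with hr
  have hγL : 0 < γ * L := mul_pos hγ hL
  have hr0 : 0 < r := by simp [hr]; linarith
  have hr1 : r < 1 := by simp [hr]; linarith
  -- closed forms for the iterates
  have key : ∀ t, (∀ ω, x t ω = r ^ t * x0 - γ * ∑ j ∈ Icc 1 t, r ^ (t - j) * z j ω) ∧
      (∀ ω, xt t ω = r ^ t * x0 + γ * ∑ j ∈ Icc 1 t, (1 - r ^ (t - j)) * z j ω) := by
    intro t
    induction t with
    | zero => simp [hx0, hxt0]
    | succ t ih =>
      obtain ⟨ihx, ihxt⟩ := ih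
      constructor
      · intro ω
        rw [hrec t ω, ihx ω]
        have e1 : ∑ j ∈ Icc 1 (t + 1), r ^ (t + 1 - j) * z j ω
            = r * ∑ j ∈ Icc 1 t, r ^ (t - j) * z j ω + z (t + 1) ω := by
          rw [Finset.sum_Icc_succ_top (Nat.le_add_left 1 t), Finset.mul_sum]
          simp only [Nat.sub_self, pow_zero, one_mul]
          congr 1
          refine Finset.sum_congr rfl fun j hj => ?_
          have hj' : j ≤ t := (Finset.mem_Icc.mp hj).2
          rw [show t + 1 - j = (t - j) + 1 by omega, pow_succ]
          ring
        rw [e1, pow_succ]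
        ring
      · intro ω
        rw [hvirt t ω, ihxt ω, ihx ω]
        have e3 : ∑ j ∈ Icc 1 (t + 1), (1 - r ^ (t + 1 - j)) * z j ω
            = ∑ j ∈ Icc 1 t, (1 - r ^ (t - j)) * z j ω
              + (γ * L) * ∑ j ∈ Icc 1 t, r ^ (t - j) * z j ω := by
          rw [Finset.sum_Icc_succ_top (Nat.le_add_left 1 t)]
          simp only [Nat.sub_self, pow_zero, sub_self, zero_mul, add_zero]
          rw [Finset.mul_sum, ← Finset.sum_add_distrib]
          refine Finset.sum_congr rfl fun j hj => ?_
          have hj' : j ≤ t := (Finset.mem_Icc.mp hj).2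
          rw [show t + 1 - j = (t - j) + 1 by omega, pow_succ]
          simp only [hr]
          ring
        rw [e3, pow_succ]
        simp only [hr]
        ring
  -- second moment computation
  have hzint : ∀ j, Integrable (z j) μ := fun j => (hL2 j).integrable one_le_two
  have hprod : ∀ j k, Integrable (fun ω => z j ω * z k ω) μ := by
    intro j k
    rcases eq_or_ne j k with rfl | h
    · have := (hL2 j).integrable_sq
      simpa [pow_two] using this
    · exact (hindep.indepFun h).integrable_mul (hzint j) (hzint k)
  have moment : ∀ (s : Finset ℕ), (∀ j ∈ s, 1 ≤ j) → ∀ (a : ℝ) (c : ℕ → ℝ),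
      ∫ ω, (a + ∑ j ∈ s, c j * z j ω) ^ 2 ∂μ = a ^ 2 + ∑ j ∈ s, (c j) ^ 2 * σ ^ 2 := by
    intro s hs a c
    have hSint : Integrable (fun ω => ∑ j ∈ s, c j * z j ω) μ :=
      integrable_finset_sum s fun j _ => (hzint j).const_mul _
    have hS : ∫ ω, ∑ j ∈ s, c j * z j ω ∂μ = 0 := by
      rw [integral_finset_sum s fun j _ => (hzint j).const_mul _]
      refine Finset.sum_eq_zero fun j hj => ?_
      rw [integral_const_mul, hmean j (hs j hj), mul_zero]
    have expand : ∀ ω : Ω, (∑ j ∈ s, c j * z j ω) ^ 2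
        = ∑ j ∈ s, ∑ k ∈ s, (c j * c k) * (z j ω * z k ω) := by
      intro ω
      rw [sq, Finset.sum_mul_sum]
      exact Finset.sum_congr rfl fun j _ => Finset.sum_congr rfl fun k _ => by ring
    have hfeq : (fun ω => (∑ j ∈ s, c j * z j ω) ^ 2)
        = fun ω => ∑ j ∈ s, ∑ k ∈ s, (c j * c k) * (z j ω * z k ω) := funext expand
    have hS2int : Integrable (fun ω => (∑ j ∈ s, c j * z j ω) ^ 2) μ := by
      rw [hfeq]
      exact integrable_finset_sum s fun j _ =>
        integrable_finset_sum s fun k _ => (hprod j k).const_mul _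
    have hSS : ∫ ω, (∑ j ∈ s, c j * z j ω) ^ 2 ∂μ = ∑ j ∈ s, (c j) ^ 2 * σ ^ 2 := by
      rw [hfeq, integral_finset_sum s fun j _ =>
        integrable_finset_sum s fun k _ => (hprod j k).const_mul _]
      refine Finset.sum_congr rfl fun j hj => ?_
      rw [integral_finset_sum s fun k _ => (hprod j k).const_mul _]
      rw [Finset.sum_eq_single j]
      · rw [integral_const_mul]
        have : ∫ ω, z j ω * z j ω ∂μ = σ ^ 2 := by
          have := hvar j (hs j hj)
          simpa [pow_two] using this
        rw [this]
        ring
      · intro k hk hkj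
        rw [integral_const_mul]
        have hind : IndepFun (z j) (z k) μ := hindep.indepFun (Ne.symm hkj)
        have : ∫ ω, z j ω * z k ω ∂μ = (∫ ω, z j ω ∂μ) * ∫ ω, z k ω ∂μ :=
          hind.integral_mul_eq_mul_integral (hzint j).aestronglyMeasurable (hzint k).aestronglyMeasurable
        rw [this, hmean j (hs j hj), zero_mul, mul_zero]
      · intro hj'
        exact absurd hj hj'
    have expand2 : ∀ ω : Ω, (a + ∑ j ∈ s, c j * z j ω) ^ 2
        = (a ^ 2 + (2 * a) * (∑ j ∈ s, c j * z j ω)) + (∑ j ∈ s, c j * z j ω) ^ 2 :=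
      fun ω => by ring
    have hint1 : Integrable (fun ω => a ^ 2 + 2 * a * ∑ j ∈ s, c j * z j ω) μ :=
      (integrable_const _).add (hSint.const_mul _)
    calc ∫ ω, (a + ∑ j ∈ s, c j * z j ω) ^ 2 ∂μ
        = ∫ ω, (a ^ 2 + 2 * a * ∑ j ∈ s, c j * z j ω) + (∑ j ∈ s, c j * z j ω) ^ 2 ∂μ :=
          integral_congr_ae (Filter.Eventually.of_forall expand2)
      _ = (∫ ω, a ^ 2 + 2 * a * ∑ j ∈ s, c j * z j ω ∂μ)
            + ∫ ω, (∑ j ∈ s, c j * z j ω) ^ 2 ∂μ := integral_add hint1 hS2int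
      _ = ((∫ _ω : Ω, a ^ 2 ∂μ) + ∫ ω, 2 * a * ∑ j ∈ s, c j * z j ω ∂μ)
            + ∫ ω, (∑ j ∈ s, c j * z j ω) ^ 2 ∂μ := by
          rw [integral_add (integrable_const _) (hSint.const_mul _)]
      _ = a ^ 2 + ∑ j ∈ s, c j ^ 2 * σ ^ 2 := by
          rw [integral_const_mul, hS, hSS, integral_const]
          simp
  -- apply to xt T
  have hxtT : ∀ ω, xt T ω = r ^ T * x0 + ∑ j ∈ Icc 1 T, (γ * (1 - r ^ (T - j))) * z j ω := by
    intro ω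
    rw [(key T).2 ω, Finset.mul_sum]
    congr 1
    exact Finset.sum_congr rfl fun j _ => by ring
  have hint : ∫ ω, (xt T ω) ^ 2 ∂μ
      = (r ^ T * x0) ^ 2 + ∑ j ∈ Icc 1 T, (γ * (1 - r ^ (T - j))) ^ 2 * σ ^ 2 := by
    rw [integral_congr_ae (Filter.Eventually.of_forall fun ω => by rw [hxtT ω])]
    exact moment (Icc 1 T) (fun j hj => (Finset.mem_Icc.mp hj).1) _ _
  -- rewrite the sum
  have hsum_eq : ∑ j ∈ Icc 1 T, (γ * (1 - r ^ (T - j))) ^ 2 * σ ^ 2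
      = γ ^ 2 * ∑ j ∈ Icc 1 (T - 1), (1 - r ^ j) ^ 2 * σ ^ 2 := by
    rcases Nat.eq_zero_or_pos T with hT0 | hT1
    · subst hT0; simp
    · have hT' : T = (T - 1) + 1 := by omega
      rw [Finset.mul_sum]
      conv_lhs => rw [hT']
      rw [Finset.sum_Icc_succ_top (Nat.le_add_left 1 (T - 1))]
      have : (γ * (1 - r ^ (T - 1 + 1 - (T - 1 + 1)))) ^ 2 * σ ^ 2 = 0 := by
        simp
      rw [this, add_zero]
      refine Finset.sum_nbij' (fun j => T - j) (fun j => T - j) ?_ ?_ ?_ ?_ ?_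
      · intro a ha
        simp only [Finset.mem_Icc] at ha ⊢
        omega
      · intro a ha
        simp only [Finset.mem_Icc] at ha ⊢
        omega
      · intro a ha
        simp only [Finset.mem_Icc] at ha
        show T - (T - a) = a
        omega
      · intro a ha
        simp only [Finset.mem_Icc] at ha
        show T - (T - a) = a
        omega
      · intro a ha
        simp only [Finset.mem_Icc] at ha
        show (γ * (1 - r ^ (T - 1 + 1 - a))) ^ 2 * σ ^ 2 = γ ^ 2 * ((1 - r ^ (T - a)) ^ 2 * σ ^ 2)
        have : T - 1 + 1 - a = T - a := by omega
        rw [this]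
        ring
  have main : ∫ ω, (xt T ω) ^ 2 ∂μ
      = r ^ (2 * T) * x0 ^ 2 + γ ^ 2 * ∑ j ∈ Icc 1 (T - 1), (1 - r ^ j) ^ 2 * σ ^ 2 := by
    rw [hint, hsum_eq, mul_pow, ← pow_mul, Nat.mul_comm T 2]
  refine ⟨main, ?_⟩
  -- lower bound part
  intro hT
  have hlog4 : 1 < Real.log 4 := by
    rw [Real.lt_log_iff_exp_lt (by norm_num : (0:ℝ) < 4)]
    calc Real.exp 1 < 2.7182818286 := Real.exp_one_lt_d9
    _ < 4 := by norm_num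
  have hT3R : (3 : ℝ) ≤ (T : ℕ) := by
    have h2 : (2 : ℝ) < 2 * Real.log 4 / (γ * L) := by
      rw [lt_div_iff₀ hγL]
      nlinarith
    have : (2 : ℝ) < (T : ℝ) := lt_of_lt_of_le h2 hT
    have : 2 < T := by exact_mod_cast this
    exact_mod_cast this
  have hT3 : 3 ≤ T := by exact_mod_cast hT3R
  -- r^T ≤ 1/16
  have hrT : r ^ T ≤ 1 / 16 := by
    have h1e : r ≤ Real.exp (-(γ * L)) := by
      have := Real.add_one_le_exp (-(γ * L))
      simp [hr]
      linarith
    have h2e : r ^ T ≤ Real.exp (-(γ * L)) ^ T :=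
      pow_le_pow_left₀ hr0.le h1e T
    have h3e : Real.exp (-(γ * L)) ^ T = Real.exp (-(γ * L) * T) := by
      rw [← Real.exp_nat_mul]
      ring_nf
    have h4e : -(γ * L) * T ≤ -Real.log 16 := by
      have hlog16 : Real.log 16 = 2 * Real.log 4 := by
        rw [show (16 : ℝ) = 4 ^ (2 : ℕ) by norm_num, Real.log_pow]
        push_cast
        ring
      have : 2 * Real.log 4 ≤ γ * L * T := by
        rw [ge_iff_le, div_le_iff₀ hγL] at hT
        linarith [hT]
      rw [hlog16]
      nlinarith
    have h5e : Real.exp (-(γ * L) * T) ≤ Real.exp (-Real.log 16) :=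
      Real.exp_le_exp.mpr h4e
    have h6e : Real.exp (-Real.log 16) = 1 / 16 := by
      rw [Real.exp_neg, Real.exp_log (by norm_num : (0:ℝ) < 16)]
      norm_num
    calc r ^ T ≤ Real.exp (-(γ * L)) ^ T := h2e
    _ = Real.exp (-(γ * L) * T) := h3e
    _ ≤ Real.exp (-Real.log 16) := h5e
    _ = 1 / 16 := h6e
  -- reflection of the sum
  have hrefl : ∑ j ∈ Icc 1 (T - 1), (1 - r ^ (T - j)) ^ 2
      = ∑ j ∈ Icc 1 (T - 1), (1 - r ^ j) ^ 2 := by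
    refine Finset.sum_nbij' (fun j => T - j) (fun j => T - j) ?_ ?_ ?_ ?_ ?_
    · intro a ha; simp only [Finset.mem_Icc] at ha ⊢; omega
    · intro a ha; simp only [Finset.mem_Icc] at ha ⊢; omega
    · intro a ha; simp only [Finset.mem_Icc] at ha; show T - (T - a) = a; omega
    · intro a ha; simp only [Finset.mem_Icc] at ha; show T - (T - a) = a; omega
    · intro a ha; rfl
  have hpair : ∀ j ∈ Icc 1 (T - 1), 1 - 2 * r ^ T ≤ (1 - r ^ j) ^ 2 + (1 - r ^ (T - j)) ^ 2 := by
    intro j hj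
    simp only [Finset.mem_Icc] at hj
    have hmul : r ^ j * r ^ (T - j) = r ^ T := by
      rw [← pow_add]
      congr 1
      omega
    nlinarith [sq_nonneg (r ^ j + r ^ (T - j) - 1)]
  have hcard : ((Icc 1 (T - 1)).card : ℝ) = (T : ℝ) - 1 := by
    rw [Nat.card_Icc]
    have : T - 1 + 1 - 1 = T - 1 := by omega
    rw [this]
    have : ((T - 1 : ℕ) : ℝ) = (T : ℝ) - 1 := by
      have : 1 ≤ T := by omega
      push_cast [Nat.cast_sub this]
      ring
    rw [this]
  have hsumlb : (T : ℝ) / 4 ≤ ∑ j ∈ Icc 1 (T - 1), (1 - r ^ j) ^ 2 := by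
    have h2S : ((T : ℝ) - 1) * (1 - 2 * r ^ T) ≤ 2 * ∑ j ∈ Icc 1 (T - 1), (1 - r ^ j) ^ 2 := by
      have := Finset.sum_le_sum hpair
      rw [Finset.sum_add_distrib, hrefl, Finset.sum_const, nsmul_eq_mul, hcard] at this
      linarith
    nlinarith [hrT, hT3R]
  rw [main]
  have hsum2 : γ ^ 2 * σ ^ 2 * (T : ℝ) / 4 ≤ γ ^ 2 * ∑ j ∈ Icc 1 (T - 1), (1 - r ^ j) ^ 2 * σ ^ 2 := by
    rw [← Finset.sum_mul]
    have hγ2 : (0 : ℝ) ≤ γ ^ 2 := sq_nonneg γ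
    have hσ2 : (0 : ℝ) ≤ σ ^ 2 := sq_nonneg σ
    calc γ ^ 2 * σ ^ 2 * (T : ℝ) / 4 = γ ^ 2 * (((T : ℝ) / 4) * σ ^ 2) := by ring
    _ ≤ γ ^ 2 * ((∑ j ∈ Icc 1 (T - 1), (1 - r ^ j) ^ 2) * σ ^ 2) := by
        apply mul_le_mul_of_nonneg_left _ hγ2
        exact mul_le_mul_of_nonneg_right hsumlb hσ2
  have hfirst : (0 : ℝ) ≤ r ^ (2 * T) * x0 ^ 2 :=
    mul_nonneg (pow_nonneg hr0.le _) (sq_nonneg x0)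
  linarith
end
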